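/- arXiv:2412.13901 — 9 statements merged into one kernel-verified Lean document; each statement's English description precedes it below -/
import Mathlib

section
/- Let H(k) be a reproducing kernel Hilbert space on a nonempty set X with kernel k. A function f : X → ℂ belongs to H(k) with norm at most c if and only if the function (x,y) ↦ c²·k(x,y) − f(x)·conj(f(y)) is a positive semidefinite kernel on X. -/
open scoped InnerProductSpace

/-- A function `k : X → X → ℂ` is a positive semidefinite (reproducing) kernel:
every finite Gram matrix is positive semidefinite. -/
def IsPSDKernel {X : Type*} (k : X → X → ℂ) : Prop :=
  ∀ (n : ℕ) (x : Fin n → X) (c : Fin n → ℂ),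
    0 ≤ (∑ i, ∑ j, starRingEnd ℂ (c i) * k (x i) (x j) * c j).re ∧
    (∑ i, ∑ j, starRingEnd ℂ (c i) * k (x i) (x j) * c j).im = 0

lemma key_sum {X : Type*} {H : Type*} [NormedAddCommGroup H] [InnerProductSpace ℂ H]
    (kv : X → H) (k : X → X → ℂ) (hk : ∀ x y, k x y = ⟪kv x, kv y⟫_ℂ)
    (f : X → ℂ) (c : ℝ) (n : ℕ) (x : Fin n → X) (a : Fin n → ℂ) :
    (∑ i, ∑ j, starRingEnd ℂ (a i) *
        ((c : ℂ) ^ 2 * k (x i) (x j) - f (x i) * starRingEnd ℂ (f (x j))) * a j)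
      = ((c ^ 2 * ‖∑ i, a i • kv (x i)‖ ^ 2
          - ‖∑ i, starRingEnd ℂ (a i) * f (x i)‖ ^ 2 : ℝ) : ℂ) := by
  set v := ∑ i, a i • kv (x i) with hv
  set w := ∑ i, starRingEnd ℂ (a i) * f (x i) with hw
  have h1 : (⟪v, v⟫_ℂ) = ∑ i, ∑ j, starRingEnd ℂ (a i) * k (x i) (x j) * a j := by
    rw [hv, sum_inner]
    refine Finset.sum_congr rfl fun i _ => ?_
    rw [inner_sum]
    refine Finset.sum_congr rfl fun j _ => ?_
    rw [inner_smul_left, inner_smul_right, hk]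
    ring
  have h2 : w * starRingEnd ℂ w
      = ∑ i, ∑ j, starRingEnd ℂ (a i) * (f (x i) * starRingEnd ℂ (f (x j))) * a j := by
    rw [hw, map_sum, Finset.sum_mul_sum]
    refine Finset.sum_congr rfl fun i _ => ?_
    refine Finset.sum_congr rfl fun j _ => ?_
    simp only [map_mul, RingHom.id_apply, starRingEnd_self_apply]
    ring
  have h3 : (⟪v, v⟫_ℂ) = ((‖v‖ ^ 2 : ℝ) : ℂ) := by
    rw [inner_self_eq_norm_sq_to_K]; norm_cast
  have h4 : w * starRingEnd ℂ w = ((‖w‖ ^ 2 : ℝ) : ℂ) := by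
    rw [Complex.mul_conj']
    norm_cast
  have expand : (∑ i, ∑ j, starRingEnd ℂ (a i) *
        ((c : ℂ) ^ 2 * k (x i) (x j) - f (x i) * starRingEnd ℂ (f (x j))) * a j)
      = (c : ℂ) ^ 2 * (∑ i, ∑ j, starRingEnd ℂ (a i) * k (x i) (x j) * a j)
        - ∑ i, ∑ j, starRingEnd ℂ (a i) * (f (x i) * starRingEnd ℂ (f (x j))) * a j := by
    rw [Finset.mul_sum, ← Finset.sum_sub_distrib]
    refine Finset.sum_congr rfl fun i _ => ?_
    rw [Finset.mul_sum, ← Finset.sum_sub_distrib]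
    refine Finset.sum_congr rfl fun j _ => ?_
    ring
  rw [expand, ← h1, ← h2, h3, h4]
  push_cast
  ring

/-- In the RKHS `H(k)` of a reproducing kernel `k` on a nonempty set `X`
(modelled by a Hilbert space `H` together with kernel vectors `kv x` whose span is dense,
with `k x y = ⟪kv x, kv y⟫` and membership of `f : X → ℂ` meaning `f = ⟪kv ·, F⟫` for some
`F : H`), a function `f` belongs to `H(k)` with norm at most `c` if and only if
`(x, y) ↦ c² k(x,y) − f(x) conj (f y)` is a positive semidefinite kernel. -/
theorem membership_norm_iff_psd
    {X : Type*} [Nonempty X]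
    {H : Type*} [NormedAddCommGroup H] [InnerProductSpace ℂ H] [CompleteSpace H]
    (kv : X → H)
    (hdense : DenseRange fun v : Submodule.span ℂ (Set.range kv) => (v : H))
    (k : X → X → ℂ) (hk : ∀ x y, k x y = ⟪kv x, kv y⟫_ℂ)
    (f : X → ℂ) (c : ℝ) (hc : 0 ≤ c) :
    (∃ F : H, (∀ x, f x = ⟪kv x, F⟫_ℂ) ∧ ‖F‖ ≤ c) ↔
      IsPSDKernel (fun x y => (c : ℂ) ^ 2 * k x y - f x * starRingEnd ℂ (f y)) := by
  constructor
  · -- easy direction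
    rintro ⟨F, hF, hFc⟩ n x a
    rw [key_sum kv k hk f c n x a]
    set v := ∑ i, a i • kv (x i) with hv
    set w := ∑ i, starRingEnd ℂ (a i) * f (x i) with hw
    have hwv : w = ⟪v, F⟫_ℂ := by
      rw [hv, sum_inner]
      refine Finset.sum_congr rfl fun i _ => ?_
      rw [inner_smul_left, hF]
    have hb : ‖w‖ ≤ c * ‖v‖ := by
      rw [hwv]
      calc ‖⟪v, F⟫_ℂ‖ ≤ ‖v‖ * ‖F‖ := norm_inner_le_norm _ _
        _ ≤ c * ‖v‖ := by nlinarith [norm_nonneg v, norm_nonneg (⟪v, F⟫_ℂ)]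
    constructor
    · simp only [Complex.ofReal_re]
      nlinarith [norm_nonneg w, norm_nonneg v, mul_nonneg hc (norm_nonneg v)]
    · exact Complex.ofReal_im _
  · -- hard direction
    intro hpsd
    -- the fundamental estimate
    have hbound : ∀ (n : ℕ) (x : Fin n → X) (a : Fin n → ℂ),
        ‖∑ i, starRingEnd ℂ (a i) * f (x i)‖ ≤ c * ‖∑ i, a i • kv (x i)‖ := by
      intro n x a
      have h := (hpsd n x a).1
      rw [key_sum kv k hk f c n x a] at h
      simp only [Complex.ofReal_re] at h
      nlinarith [norm_nonneg (∑ i, starRingEnd ℂ (a i) * f (x i)),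
        norm_nonneg (∑ i, a i • kv (x i)), mul_nonneg hc (norm_nonneg (∑ i, a i • kv (x i)))]
    set T : (X →₀ ℂ) →ₗ[ℂ] H := Finsupp.linearCombination ℂ kv with hT
    set φ : (X →₀ ℂ) →ₗ[ℂ] ℂ :=
      Finsupp.linearCombination ℂ (fun y => starRingEnd ℂ (f y)) with hφ
    -- estimate in Finsupp form
    have hest : ∀ d : X →₀ ℂ, ‖φ d‖ ≤ c * ‖T d‖ := by
      intro d
      set n := d.support.card with hn
      set e : d.support ≃ Fin n := d.support.equivFin with he
      set x : Fin n → X := fun i => (e.symm i : X) with hx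
      set a : Fin n → ℂ := fun i => d (x i) with ha
      have hTe : T d = ∑ i, a i • kv (x i) := by
        rw [hT, Finsupp.linearCombination_apply, Finsupp.sum]
        rw [← Finset.sum_coe_sort d.support (fun y => d y • kv y)]
        exact (Equiv.sum_comp e.symm _).symm
      have hφe : φ d = ∑ i, a i * starRingEnd ℂ (f (x i)) := by
        rw [hφ, Finsupp.linearCombination_apply, Finsupp.sum]
        rw [← Finset.sum_coe_sort d.support (fun y => d y • starRingEnd ℂ (f y))]
        exact (Equiv.sum_comp e.symm _).symm
      have hconj : φ d = starRingEnd ℂ (∑ i, starRingEnd ℂ (a i) * f (x i)) := by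
        rw [hφe, map_sum]
        refine Finset.sum_congr rfl fun i _ => ?_
        simp [mul_comm]
      have : ‖φ d‖ = ‖∑ i, starRingEnd ℂ (a i) * f (x i)‖ := by
        rw [hconj]; exact RCLike.norm_conj _
      rw [this, hTe]
      exact hbound n x a
    -- φ vanishes on ker T
    have hker : LinearMap.ker T ≤ LinearMap.ker φ := by
      intro d hd
      rw [LinearMap.mem_ker] at hd ⊢
      have := hest d
      rw [hd, norm_zero, mul_zero] at this
      exact norm_le_zero_iff.mp this
    -- the functional on the range of T
    set L₀ : LinearMap.range T →ₗ[ℂ] ℂ :=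
      ((LinearMap.ker T).liftQ φ hker).comp (LinearMap.quotKerEquivRange T).symm.toLinearMap
      with hL₀
    have hL₀apply : ∀ (d : X →₀ ℂ) (h : T d ∈ LinearMap.range T), L₀ ⟨T d, h⟩ = φ d := by
      intro d h
      have hsymm : (LinearMap.quotKerEquivRange T).symm ⟨T d, h⟩
          = (LinearMap.ker T).mkQ d :=
        LinearMap.quotKerEquivRange_symm_apply_image T d h
      rw [hL₀, LinearMap.comp_apply, LinearEquiv.coe_toLinearMap, hsymm,
        Submodule.mkQ_apply, Submodule.liftQ_apply]
    have hL₀bound : ∀ v : LinearMap.range T, ‖L₀ v‖ ≤ c * ‖v‖ := by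
      rintro ⟨v, hv⟩
      obtain ⟨d, rfl⟩ := hv
      rw [hL₀apply d (LinearMap.mem_range_self T d)]
      exact hest d
    set L : LinearMap.range T →L[ℂ] ℂ := LinearMap.mkContinuous L₀ c hL₀bound with hL
    have hLnorm : ‖L‖ ≤ c := LinearMap.mkContinuous_norm_le L₀ hc hL₀bound
    -- extend to all of H
    have hrange : LinearMap.range T = Submodule.span ℂ (Set.range kv) :=
      Finsupp.range_linearCombination ℂ (v := kv)
    have hdense' : DenseRange ((LinearMap.range T).subtypeL) := by
      rw [hrange]; exact hdense
    have h_e : ∀ v : LinearMap.range T, ‖v‖ ≤ (1 : NNReal) * ‖(LinearMap.range T).subtypeL v‖ := by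
      intro v; simp
    set Lext : H →L[ℂ] ℂ :=
      L.extend (LinearMap.range T).subtypeL with hLext
    have hLextnorm : ‖Lext‖ ≤ 1 * ‖L‖ :=
      ContinuousLinearMap.opNorm_extend_le L hdense' h_e
    set F : H := (InnerProductSpace.toDual ℂ H).symm Lext with hF
    refine ⟨F, fun x => ?_, ?_⟩
    · have hmem : kv x ∈ LinearMap.range T := by
        refine ⟨Finsupp.single x 1, ?_⟩
        simp [hT]
      have h1 : (⟪F, kv x⟫_ℂ) = Lext (kv x) := InnerProductSpace.toDual_symm_apply
      have h2 : Lext (kv x) = L ⟨kv x, hmem⟩ :=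
        ContinuousLinearMap.extend_eq L hdense'
          (ContinuousLinearMap.isUniformEmbedding_of_bound _ h_e).isUniformInducing ⟨kv x, hmem⟩
      have h3 : L ⟨kv x, hmem⟩ = starRingEnd ℂ (f x) := by
        have hsingle : T (Finsupp.single x 1) = kv x := by simp [hT]
        have : L ⟨kv x, hmem⟩ = L₀ ⟨kv x, hmem⟩ := rfl
        rw [this]
        have : (⟨kv x, hmem⟩ : LinearMap.range T)
            = ⟨T (Finsupp.single x 1), LinearMap.mem_range_self T _⟩ := by
          exact Subtype.ext hsingle.symm
        rw [this, hL₀apply]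
        simp [hφ]
      have : (⟪F, kv x⟫_ℂ) = starRingEnd ℂ (f x) := by rw [h1, h2, h3]
      calc f x = starRingEnd ℂ (starRingEnd ℂ (f x)) := by simp
        _ = starRingEnd ℂ (⟪F, kv x⟫_ℂ) := by rw [this]
        _ = ⟪kv x, F⟫_ℂ := by rw [inner_conj_symm]
    · have : ‖F‖ = ‖Lext‖ := LinearIsometryEquiv.norm_map _ _
      rw [this]
      calc ‖Lext‖ ≤ 1 * ‖L‖ := hLextnorm
        _ = ‖L‖ := one_mul _
        _ ≤ c := hLnorm
end

section
/- Let k, t be reproducing kernels on nonempty sets X and Y respectively, with t nonzero, and let φ : X → Y be such that (x,y) ↦ k(x,y)/t(φ(x),φ(y)) is a reproducing kernel. Then for every f in the Hilbert space H(k/(t∘φ)), the weighted composition operator W_{f,φ} defined by (W_{f,φ} g)(x) = f(x)·g(φ(x)) is a bounded linear operator from H(t) into H(k) with norm at most ‖f‖. -/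
open scoped ComplexOrder

lemma isPSDKernel_iff {X : Type*} (k : X → X → ℂ) : IsPSDKernel k ↔
    ∀ (n : ℕ) (x : Fin n → X) (c : Fin n → ℂ),
      (0:ℂ) ≤ ∑ i, ∑ j, starRingEnd ℂ (c i) * k (x i) (x j) * c j := by
  unfold IsPSDKernel
  refine forall_congr' fun n => forall_congr' fun x => forall_congr' fun c => ?_
  rw [Complex.le_def]
  simp [eq_comm]

lemma herm {X : Type*} {k : X → X → ℂ} (h : IsPSDKernel k) (a b : X) :
    k b a = starRingEnd ℂ (k a b) := by
  have h1 := (h 2 ![a,b] ![1,1]).2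
  have h2 := (h 2 ![a,b] ![1,Complex.I]).2
  have h3 := (h 2 ![a,b] ![1,0]).2
  have h4 := (h 2 ![a,b] ![0,1]).2
  simp [Fin.sum_univ_two, Complex.add_im, Complex.mul_im, Complex.mul_re] at h1 h2 h3 h4
  apply Complex.ext
  · simp only [Complex.conj_re]; linarith
  · simp only [Complex.conj_im]; linarith

lemma schur {X : Type*} {k t : X → X → ℂ} (hk : IsPSDKernel k) (ht : IsPSDKernel t) :
    IsPSDKernel (fun x y => k x y * t x y) := by
  have hh := herm ht
  rw [isPSDKernel_iff] at hk ht ⊢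
  intro n x c
  set B : Matrix (Fin n) (Fin n) ℂ := Matrix.of fun i j => t (x i) (x j) with hBdef
  have hB : B.PosSemidef := by
    refine Matrix.PosSemidef.of_dotProduct_mulVec_nonneg ?_ ?_
    · ext i j
      simp only [Matrix.conjTranspose_apply, hBdef, Matrix.of_apply]
      rw [hh (x i) (x j)]
      exact star_star _
    · intro v
      have h := ht n x v
      convert h using 1
      simp only [dotProduct, Matrix.mulVec, dotProduct, Pi.star_apply,
        hBdef, Matrix.of_apply, Finset.mul_sum]
      refine Finset.sum_congr rfl fun i _ => Finset.sum_congr rfl fun j _ => ?_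
      simp only [RCLike.star_def]
      ring
  obtain ⟨C, hC⟩ : ∃ C : Matrix (Fin n) (Fin n) ℂ, B = C.conjTranspose * C := by
    open scoped MatrixOrder in
    exact ⟨CFC.sqrt B, by
      have h0 : 0 ≤ B := Matrix.nonneg_iff_posSemidef.mpr hB
      rw [← Matrix.star_eq_conjTranspose, (CFC.sqrt_nonneg B).isSelfAdjoint.star_eq,
        CFC.sqrt_mul_sqrt_self B h0]⟩
  have hBij : ∀ i j, t (x i) (x j) = ∑ l, starRingEnd ℂ (C l i) * C l j := by
    intro i j
    have : B i j = (C.conjTranspose * C) i j := by rw [hC]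
    simpa [Matrix.mul_apply, Matrix.conjTranspose_apply, RCLike.star_def, hBdef] using this
  have key : ∑ i, ∑ j, starRingEnd ℂ (c i) * (k (x i) (x j) * t (x i) (x j)) * c j
      = ∑ l, ∑ i, ∑ j, starRingEnd ℂ (C l i * c i) * k (x i) (x j) * (C l j * c j) := by
    calc ∑ i, ∑ j, starRingEnd ℂ (c i) * (k (x i) (x j) * t (x i) (x j)) * c j
        = ∑ i, ∑ j, ∑ l, starRingEnd ℂ (C l i * c i) * k (x i) (x j) * (C l j * c j) := by
          refine Finset.sum_congr rfl fun i _ => Finset.sum_congr rfl fun j _ => ?_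
          rw [hBij, Finset.mul_sum, Finset.mul_sum, Finset.sum_mul]
          refine Finset.sum_congr rfl fun l _ => ?_
          simp only [map_mul]
          ring
      _ = ∑ i, ∑ l, ∑ j, starRingEnd ℂ (C l i * c i) * k (x i) (x j) * (C l j * c j) :=
          Finset.sum_congr rfl fun i _ => Finset.sum_comm
      _ = ∑ l, ∑ i, ∑ j, starRingEnd ℂ (C l i * c i) * k (x i) (x j) * (C l j * c j) :=
          Finset.sum_comm
  rw [key]
  exact Finset.sum_nonneg fun l _ => hk n x fun i => C l i * c i

lemma psd_pullback {X Y : Type*} {t : Y → Y → ℂ} (ht : IsPSDKernel t) (φ : X → Y) :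
    IsPSDKernel (fun x y => t (φ x) (φ y)) :=
  fun n x c => ht n (fun i => φ (x i)) c

lemma psd_rankOne {X : Type*} (f : X → ℂ) :
    IsPSDKernel (fun x y => f x * starRingEnd ℂ (f y)) := by
  rw [isPSDKernel_iff]
  intro n x c
  have : ∑ i, ∑ j, starRingEnd ℂ (c i) * (f (x i) * starRingEnd ℂ (f (x j))) * c j
      = (∑ i, starRingEnd ℂ (c i) * f (x i)) *
        starRingEnd ℂ (∑ i, starRingEnd ℂ (c i) * f (x i)) := by
    rw [map_sum, Finset.sum_mul]
    refine Finset.sum_congr rfl fun i _ => ?_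
    rw [Finset.mul_sum]
    refine Finset.sum_congr rfl fun j _ => ?_
    simp only [map_mul, RingHomCompTriple.comp_apply, RingHom.id_apply,
      Complex.conj_conj]
    ring
  rw [this, Complex.mul_conj]
  rw [Complex.le_def]
  simp [Complex.normSq_nonneg]

lemma psd_add {X : Type*} {k t : X → X → ℂ} (hk : IsPSDKernel k) (ht : IsPSDKernel t) :
    IsPSDKernel (fun x y => k x y + t x y) := by
  rw [isPSDKernel_iff] at *
  intro n x c
  have : ∑ i, ∑ j, starRingEnd ℂ (c i) * (k (x i) (x j) + t (x i) (x j)) * c j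
      = (∑ i, ∑ j, starRingEnd ℂ (c i) * k (x i) (x j) * c j)
        + ∑ i, ∑ j, starRingEnd ℂ (c i) * t (x i) (x j) * c j := by
    rw [← Finset.sum_add_distrib]
    refine Finset.sum_congr rfl fun i _ => ?_
    rw [← Finset.sum_add_distrib]
    exact Finset.sum_congr rfl fun j _ => by ring
  rw [this]
  exact add_nonneg (hk n x c) (ht n x c)

lemma psd_congr {X : Type*} {k t : X → X → ℂ} (h : ∀ x y, k x y = t x y)
    (hk : IsPSDKernel k) : IsPSDKernel t := by
  have : k = t := funext fun x => funext fun y => h x y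
  rwa [← this]

lemma psd_const_smul {X : Type*} {k : X → X → ℂ} (hk : IsPSDKernel k) {r : ℝ}
    (hr : 0 ≤ r) : IsPSDKernel (fun x y => (r : ℂ) * k x y) := by
  have h1 : IsPSDKernel (fun (_ _ : X) => (r : ℂ)) := by
    refine psd_congr (fun x y => ?_) (psd_rankOne (fun _ : X => (Real.sqrt r : ℂ)))
    rw [Complex.conj_ofReal, ← Complex.ofReal_mul, Real.mul_self_sqrt hr]
  exact schur h1 hk

/-- if `φ` is a composition factor of `k` with `t` (that is,
`(x,y) ↦ k x y / t (φ x) (φ y)` is a PSD kernel, `t` nonzero) and `f` belongs to the space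
`H(k/(t∘φ))` with norm at most `c` (expressed via the kernel characterization of membership),
then for every `g ∈ H(t)` with norm at most `m`, the weighted composition
`x ↦ f x * g (φ x)` belongs to `H(k)` with norm at most `c * m`; i.e. the weighted
composition operator `W_{f,φ} : H(t) → H(k)` is bounded with norm at most `‖f‖`. -/
theorem weighted_composition_bounded
    {X Y : Type*} [Nonempty X] [Nonempty Y]
    (k : X → X → ℂ) (t : Y → Y → ℂ) (φ : X → Y)
    (hk : IsPSDKernel k) (ht : IsPSDKernel t)
    (htne : ∀ y y' : Y, t y y' ≠ 0)
    (hfact : IsPSDKernel (fun x y => k x y / t (φ x) (φ y)))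
    (f : X → ℂ) (c : ℝ) (hc : 0 ≤ c)
    (hf : IsPSDKernel (fun x y =>
      (c : ℂ) ^ 2 * (k x y / t (φ x) (φ y)) - f x * starRingEnd ℂ (f y))) :
    ∀ (g : Y → ℂ) (m : ℝ), 0 ≤ m →
      IsPSDKernel (fun x y => (m : ℂ) ^ 2 * t x y - g x * starRingEnd ℂ (g y)) →
      IsPSDKernel (fun x y => ((c * m : ℝ) : ℂ) ^ 2 * k x y -
        (f x * g (φ x)) * starRingEnd ℂ (f y * g (φ y))) := by
  intro g m hm hg
  have hgφ : IsPSDKernel (fun x y =>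
      (m : ℂ) ^ 2 * t (φ x) (φ y) - g (φ x) * starRingEnd ℂ (g (φ y))) :=
    psd_pullback hg φ
  have htφ : IsPSDKernel (fun x y => t (φ x) (φ y)) := psd_pullback ht φ
  have hm2tφ : IsPSDKernel (fun x y => ((m ^ 2 : ℝ) : ℂ) * t (φ x) (φ y)) :=
    psd_const_smul htφ (sq_nonneg m)
  have h1 := schur hf hm2tφ
  have h2 := schur (psd_rankOne f) hgφ
  have h3 := psd_add h1 h2
  refine psd_congr (fun x y => ?_) h3
  have hT := htne (φ x) (φ y)
  simp only [map_mul]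
  push_cast
  field_simp
  ring
end

section
/- Let k be a reproducing kernel on a nonempty set X and let (x_n) be a sequence in X such that the kernel functions k_{x_n} converge pointwise to a function k_ξ that does not belong to H(k). Then k(x_n, x_n) = ‖k_{x_n}‖² → ∞ as n → ∞. -/
open scoped InnerProductSpace
open Filter

/-- let `k` be a reproducing kernel on a nonempty set `X`, modelled by a
Hilbert space `H` with kernel vectors `kv x` (`k x y = ⟪kv x, kv y⟫`, so `k_x = kv x`
and `f(x) = ⟪kv x, F⟫` for `f ∈ H(k)`).  If the kernel functions `k_{x_n} = k (·) (x n)`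
converge pointwise to a function `kξ` which does not belong to `H(k)`, then
`k(x_n, x_n) = ‖k_{x_n}‖² → ∞`. -/
theorem boundary_explosion
    {X : Type*} [Nonempty X]
    {H : Type*} [NormedAddCommGroup H] [InnerProductSpace ℂ H] [CompleteSpace H]
    (kv : X → H) (k : X → X → ℂ) (hk : ∀ x y, k x y = ⟪kv x, kv y⟫_ℂ)
    (x : ℕ → X) (kξ : X → ℂ)
    (hlim : ∀ y, Tendsto (fun n => k y (x n)) atTop (nhds (kξ y)))
    (hnotin : ¬ ∃ F : H, ∀ y, kξ y = ⟪kv y, F⟫_ℂ) :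
    Tendsto (fun n => (k (x n) (x n)).re) atTop atTop := by
  by_contra hT
  rw [tendsto_atTop_atTop] at hT
  push_neg at hT
  obtain ⟨b, hb⟩ := hT
  set S : Set ℕ := {n | (k (x n) (x n)).re < b} with hS
  have hne : (atTop ⊓ 𝓟 S).NeBot := by
    rw [inf_principal_neBot_iff]
    intro U hU
    obtain ⟨N, hN⟩ := mem_atTop_sets.mp hU
    obtain ⟨n, hn, hlt⟩ := hb N
    exact ⟨n, hN n hn, hlt⟩
  set U : Ultrafilter ℕ := Ultrafilter.of (atTop ⊓ 𝓟 S) with hUdef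
  have hU : (U : Filter ℕ) ≤ atTop ⊓ 𝓟 S := Ultrafilter.of_le _
  have hUtop : (U : Filter ℕ) ≤ atTop := hU.trans inf_le_left
  have hUS : S ∈ U := (hU.trans inf_le_right) (mem_principal_self S)
  set g : ℕ → WeakDual ℂ H :=
    fun n => (InnerProductSpace.toDual ℂ H (kv (x n)) : WeakDual ℂ H) with hg
  set B : Set (WeakDual ℂ H) :=
    WeakDual.toStrongDual ⁻¹' Metric.closedBall 0 (Real.sqrt (max b 0)) with hB
  have hnorm : ∀ n, ‖kv (x n)‖ ^ 2 = (k (x n) (x n)).re := by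
    intro n
    rw [hk]
    exact (inner_self_eq_norm_sq (𝕜 := ℂ) (kv (x n))).symm
  have hbound : ∀ n ∈ S, g n ∈ B := by
    intro n hn
    simp only [hB, Set.mem_preimage, Metric.mem_closedBall, dist_zero_right]
    have : WeakDual.toStrongDual (g n) = InnerProductSpace.toDual ℂ H (kv (x n)) := rfl
    rw [this, LinearIsometryEquiv.norm_map, Real.le_sqrt (norm_nonneg _) (le_max_right _ _), hnorm n]
    exact le_trans (le_of_lt hn) (le_max_left _ _)
  have hmap : (Ultrafilter.map g U : Filter (WeakDual ℂ H)) ≤ 𝓟 B := by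
    rw [le_principal_iff]
    exact Ultrafilter.mem_map.mpr (U.toFilter.sets_of_superset hUS fun n hn => hbound n hn)
  obtain ⟨F', hF'B, hF'⟩ :=
    (WeakDual.isCompact_closedBall (0 : StrongDual ℂ H)
      (Real.sqrt (max b 0))).ultrafilter_le_nhds (Ultrafilter.map g U) hmap
  have htend : Tendsto g U (nhds F') := hF'
  set F : H := (InnerProductSpace.toDual ℂ H).symm F' with hF
  apply hnotin
  refine ⟨F, fun y => ?_⟩
  have h1 : Tendsto (fun n => k y (x n)) U (nhds (kξ y)) := (hlim y).mono_left hUtop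
  have h2 : Tendsto (fun n => (g n : H →L[ℂ] ℂ) (kv y)) U (nhds (F' (kv y))) := by
    exact (tendsto_iff_forall_eval_tendsto_topDualPairing).mp htend (kv y)
  have h3 : Tendsto (fun n => k y (x n)) U (nhds ((starRingEnd ℂ) (F' (kv y)))) := by
    have : ∀ n, k y (x n) = (starRingEnd ℂ) ((g n : H →L[ℂ] ℂ) (kv y)) := by
      intro n
      have : ((g n : H →L[ℂ] ℂ) (kv y)) = ⟪kv (x n), kv y⟫_ℂ :=
        InnerProductSpace.toDual_apply_apply
      rw [this, ← inner_conj_symm, hk, starRingEnd_self_apply]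
    simp only [this]
    exact (Complex.continuous_conj.tendsto _).comp h2
  have heq : kξ y = (starRingEnd ℂ) (F' (kv y)) := tendsto_nhds_unique h1 h3
  rw [heq]
  have : F' (kv y) = ⟪F, kv y⟫_ℂ := by
    rw [hF]
    exact InnerProductSpace.toDual_symm_apply.symm
  rw [this, ← inner_conj_symm]
  exact Complex.conj_conj _
end

section
/- Let k be a reproducing kernel on X and (x_n) a sequence in X such that k_{x_n} converges pointwise to a function k_ξ ∉ H(k). Then for every f ∈ H(k), f(x_n)/k(x_n,x_n)^{1/2} → 0 as n → ∞; equivalently the normalized kernel functions k_{x_n}/‖k_{x_n}‖ converge weakly to 0. -/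
open scoped InnerProductSpace ComplexConjugate
open Filter

private lemma norm_inner_div_norm_le {H : Type*} [NormedAddCommGroup H]
    [InnerProductSpace ℂ H] (u v : H) :
    ‖⟪u, v⟫_ℂ / ((‖u‖ : ℂ))‖ ≤ ‖v‖ := by
  rcases eq_or_ne u 0 with rfl | hu
  · simp
  · have hn : (0:ℝ) < ‖u‖ := norm_pos_iff.mpr hu
    rw [norm_div]
    rw [Complex.norm_real, Real.norm_of_nonneg (norm_nonneg u)]
    rw [div_le_iff₀ hn]
    calc ‖⟪u, v⟫_ℂ‖ ≤ ‖u‖ * ‖v‖ := norm_inner_le_norm u v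
      _ = ‖v‖ * ‖u‖ := by ring

/-- with `k` a reproducing kernel on `X` modelled by a Hilbert space `H`
with kernel vectors `kv x` (`k x y = ⟪kv x, kv y⟫`, `f(x) = ⟪kv x, F⟫`), if the kernel
functions `k (·) (x n)` converge pointwise to `kξ ∉ H(k)`, then every `f ∈ H(k)` satisfies
`f (x n) / k(x_n,x_n)^{1/2} → 0`; equivalently the normalized kernel vectors
`kv (x n) / ‖kv (x n)‖` converge weakly to `0`. -/
theorem growth_restriction
    {X : Type*} [Nonempty X]
    {H : Type*} [NormedAddCommGroup H] [InnerProductSpace ℂ H] [CompleteSpace H]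
    (kv : X → H) (k : X → X → ℂ) (hk : ∀ x y, k x y = ⟪kv x, kv y⟫_ℂ)
    (x : ℕ → X) (kξ : X → ℂ)
    (hlim : ∀ y, Tendsto (fun n => k y (x n)) atTop (nhds (kξ y)))
    (hnotin : ¬ ∃ F : H, ∀ y, kξ y = ⟪kv y, F⟫_ℂ) :
    ∀ F : H, Tendsto (fun n => ⟪kv (x n), F⟫_ℂ / ((‖kv (x n)‖ : ℂ)))
      atTop (nhds 0) := by
  classical
  set S : Submodule ℂ H := Submodule.span ℂ (Set.range kv) with hS
  set K : Submodule ℂ H := S.topologicalClosure with hK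
  haveI : CompleteSpace K :=
    (Submodule.isClosed_topologicalClosure S).completeSpace_coe
  -- the conjugated limits on generators
  have hconj : ∀ y, Tendsto (fun n => ⟪kv (x n), kv y⟫_ℂ) atTop (nhds (conj (kξ y))) := by
    intro y
    have h1 : Tendsto (fun n => conj (k y (x n))) atTop (nhds (conj (kξ y))) :=
      ((Complex.continuous_conj).tendsto _).comp (hlim y)
    refine h1.congr fun n => ?_
    rw [hk, inner_conj_symm]
  -- Step 1: ‖kv (x n)‖ → ∞
  have hcinf : Tendsto (fun n => ‖kv (x n)‖) atTop atTop := by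
    by_contra hcon
    simp only [Filter.tendsto_atTop, not_forall, Filter.not_eventually, not_le] at hcon
    obtain ⟨C, hC⟩ := hcon
    obtain ⟨φ, hφmono, hφ⟩ := Filter.extraction_of_frequently_atTop hC
    -- limits exist on the span
    have exM : ∀ g ∈ S, ∃ l : ℂ, Tendsto (fun n => ⟪kv (x n), g⟫_ℂ) atTop (nhds l) := by
      intro g hg
      induction hg using Submodule.span_induction with
      | mem g hg =>
        obtain ⟨y, rfl⟩ := hg
        exact ⟨conj (kξ y), hconj y⟩
      | zero => exact ⟨0, by simpa using tendsto_const_nhds⟩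
      | add a b ha hb iha ihb =>
        obtain ⟨la, hla⟩ := iha
        obtain ⟨lb, hlb⟩ := ihb
        exact ⟨la + lb, by simpa [inner_add_right] using hla.add hlb⟩
      | smul r a ha ih =>
        obtain ⟨la, hla⟩ := ih
        exact ⟨r * la, by simpa [inner_smul_right] using hla.const_mul r⟩
    have Lspec : ∀ g : S, Tendsto (fun n => ⟪kv (x n), (g : H)⟫_ℂ) atTop
        (nhds ((exM g g.2).choose)) := fun g => (exM g g.2).choose_spec
    let L : S →ₗ[ℂ] ℂ :=
      { toFun := fun g => (exM g g.2).choose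
        map_add' := by
          intro a b
          refine tendsto_nhds_unique (Lspec (a + b)) ?_
          simpa [inner_add_right] using (Lspec a).add (Lspec b)
        map_smul' := by
          intro r a
          refine tendsto_nhds_unique (Lspec (r • a)) ?_
          simpa [inner_smul_right] using (Lspec a).const_mul r }
    have hLb : ∀ g : S, ‖L g‖ ≤ C * ‖g‖ := by
      intro g
      have h1 : Tendsto (fun n => ‖⟪kv (x (φ n)), (g : H)⟫_ℂ‖) atTop (nhds ‖L g‖) :=
        (((Lspec g).comp hφmono.tendsto_atTop).norm)
      refine le_of_tendsto h1 (Eventually.of_forall fun n => ?_)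
      calc ‖⟪kv (x (φ n)), (g : H)⟫_ℂ‖ ≤ ‖kv (x (φ n))‖ * ‖(g : H)‖ :=
            norm_inner_le_norm _ _
        _ ≤ C * ‖g‖ := mul_le_mul_of_nonneg_right (hφ n).le (norm_nonneg _)
    let Lc : S →L[ℂ] ℂ := LinearMap.mkContinuous L C hLb
    -- inclusion of S into K
    let e₀ : S →ₗ[ℂ] K := Submodule.inclusion S.le_topologicalClosure
    have he₀ : ∀ g : S, ‖e₀ g‖ = ‖g‖ := fun g => rfl
    let e : S →L[ℂ] K := LinearMap.mkContinuous e₀ 1 (fun g => by rw [he₀, one_mul])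
    have h_e : IsUniformInducing e :=
      (AddMonoidHomClass.isometry_of_norm e he₀).isUniformInducing
    have h_dense : DenseRange e := by
      rw [Metric.denseRange_iff]
      rintro ⟨v, hv⟩ r hr
      have hv' : v ∈ closure (S : Set H) := by
        rw [← Submodule.topologicalClosure_coe, ← hK]; exact hv
      rw [Metric.mem_closure_iff] at hv'
      obtain ⟨w, hwS, hw⟩ := hv' r hr
      exact ⟨⟨w, hwS⟩, by rw [Subtype.dist_eq]; exact hw⟩
    let Lk : K →L[ℂ] ℂ := Lc.extend e
    let F₀ : K := (InnerProductSpace.toDual ℂ K).symm Lk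
    refine hnotin ⟨(F₀ : H), fun y => ?_⟩
    have hy : kv y ∈ S := Submodule.subset_span ⟨y, rfl⟩
    set sy : S := ⟨kv y, hy⟩ with hsy
    have h1 : Lk (e sy) = Lc sy := Lc.extend_eq h_dense h_e sy
    have h2 : (⟪F₀, e sy⟫_ℂ : ℂ) = Lk (e sy) := InnerProductSpace.toDual_symm_apply
    have h3 : (⟪F₀, e sy⟫_ℂ : ℂ) = ⟪(F₀ : H), kv y⟫_ℂ := rfl
    have h4 : Lc sy = conj (kξ y) :=
      tendsto_nhds_unique (Lspec sy) (hconj y)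
    have h5 : ⟪(F₀ : H), kv y⟫_ℂ = conj (kξ y) := by
      rw [← h3, h2, h1, h4]
    calc kξ y = conj (conj (kξ y)) := by rw [Complex.conj_conj]
      _ = conj (⟪(F₀ : H), kv y⟫_ℂ) := by rw [h5]
      _ = ⟪kv y, (F₀ : H)⟫_ℂ := inner_conj_symm _ _
  -- Step 2: the weak convergence
  intro F
  -- reduce to the component in K
  have hKmem : ∀ n, kv (x n) ∈ K :=
    fun n => S.le_topologicalClosure (Submodule.subset_span ⟨x n, rfl⟩)
  set G : H := (K.orthogonalProjectionOnto F : H) with hG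
  have hsplit : ∀ n, ⟪kv (x n), F⟫_ℂ = ⟪kv (x n), G⟫_ℂ := by
    intro n
    have horth : F - G ∈ Kᗮ := K.sub_starProjection_mem_orthogonal F
    have h0 : ⟪kv (x n), F - G⟫_ℂ = 0 :=
      (Submodule.mem_orthogonal K (F - G)).mp horth _ (hKmem n)
    have hsub : ⟪kv (x n), F⟫_ℂ - ⟪kv (x n), G⟫_ℂ = 0 := by
      rw [← inner_sub_right]; exact h0
    exact sub_eq_zero.mp hsub
  have hinv : Tendsto (fun n => ((‖kv (x n)‖ : ℂ))⁻¹) atTop (nhds 0) := by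
    rw [tendsto_zero_iff_norm_tendsto_zero]
    have h1 : Tendsto (fun n => (‖kv (x n)‖)⁻¹) atTop (nhds 0) :=
      hcinf.inv_tendsto_atTop
    refine h1.congr fun n => ?_
    rw [norm_inv, Complex.norm_real, Real.norm_of_nonneg (norm_nonneg _)]
  -- convergence to 0 on the span
  have hspan0 : ∀ g ∈ S, Tendsto
      (fun n => ⟪kv (x n), g⟫_ℂ / ((‖kv (x n)‖ : ℂ))) atTop (nhds 0) := by
    intro g hg
    induction hg using Submodule.span_induction with
    | mem g hg =>
      obtain ⟨y, rfl⟩ := hg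
      have := (hconj y).mul hinv
      rw [mul_zero] at this
      refine this.congr fun n => ?_
      rw [div_eq_mul_inv]
    | zero => simpa using tendsto_const_nhds
    | add a b ha hb iha ihb =>
      have := iha.add ihb
      rw [add_zero] at this
      refine this.congr fun n => ?_
      rw [inner_add_right, add_div]
    | smul r a ha ih =>
      have := ih.const_mul r
      rw [mul_zero] at this
      refine this.congr fun n => ?_
      rw [inner_smul_right, mul_div_assoc]
  -- convergence to 0 on the closure, applied to G
  have hGK : G ∈ K := (K.orthogonalProjectionOnto F).2
  have hGtend : Tendsto (fun n => ⟪kv (x n), G⟫_ℂ / ((‖kv (x n)‖ : ℂ)))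
      atTop (nhds 0) := by
    rw [NormedAddCommGroup.tendsto_nhds_zero]
    intro ε hε
    have hGc : G ∈ closure (S : Set H) := by
      rw [← Submodule.topologicalClosure_coe, ← hK]; exact hGK
    rw [Metric.mem_closure_iff] at hGc
    obtain ⟨g, hgS, hg⟩ := hGc (ε / 2) (by positivity)
    have h2' : ∀ᶠ n in atTop,
        ‖⟪kv (x n), g⟫_ℂ / ((‖kv (x n)‖ : ℂ))‖ < ε / 2 :=
      (NormedAddCommGroup.tendsto_nhds_zero.mp (hspan0 g hgS)) (ε / 2) (by positivity)
    filter_upwards [h2'] with n hn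
    have key : ⟪kv (x n), G⟫_ℂ / ((‖kv (x n)‖ : ℂ)) =
        ⟪kv (x n), G - g⟫_ℂ / ((‖kv (x n)‖ : ℂ)) +
          ⟪kv (x n), g⟫_ℂ / ((‖kv (x n)‖ : ℂ)) := by
      rw [inner_sub_right]; ring
    rw [key]
    have hA : ‖⟪kv (x n), G - g⟫_ℂ / ((‖kv (x n)‖ : ℂ))‖ < ε / 2 := by
      refine lt_of_le_of_lt (norm_inner_div_norm_le _ _) ?_
      rwa [dist_eq_norm] at hg
    calc ‖⟪kv (x n), G - g⟫_ℂ / ((‖kv (x n)‖ : ℂ)) +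
          ⟪kv (x n), g⟫_ℂ / ((‖kv (x n)‖ : ℂ))‖
        ≤ ‖⟪kv (x n), G - g⟫_ℂ / ((‖kv (x n)‖ : ℂ))‖ +
          ‖⟪kv (x n), g⟫_ℂ / ((‖kv (x n)‖ : ℂ))‖ := norm_add_le _ _
      _ < ε / 2 + ε / 2 := add_lt_add hA hn
      _ = ε := by ring
  refine hGtend.congr fun n => ?_
  rw [hsplit n]
end

section
/- (Abstract Julia–Carathéodory, key implication) Let k, t be reproducing kernels on X, Y with t satisfying: (B) there is b > 0 with |t(x,y)| > b for all x,y; and (C) for ξ in the reproductive boundary of t with boundary function t_λ, if |t_λ(y_n)| → ∞ then y_n converges to λ in the k-sense. Let φ be a composition factor of k with t, let ξ ∈ ∂_k X with boundary function k_ξ, and λ ∈ ∂_t Y with boundary function t_λ, and suppose q_ξ(x) = k_ξ(x)/t_λ(φ(x)) belongs to H(k/(t∘φ)). Then for every sequence (x_n) with x_n →_k ξ inside a horocyclic region E_k(M,ξ) = {x : k(x,x) ≤ M|k_ξ(x)|²}, one has |t_λ(φ(x_n))| → ∞, hence φ(x_n) →_t λ. -/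
open scoped InnerProductSpace
open Filter Metric

lemma exists_inner_clusterPt {H : Type*} [NormedAddCommGroup H] [InnerProductSpace ℂ H]
    [CompleteSpace H] (l : Filter ℕ) [l.NeBot] (v : ℕ → H) (B : ℝ)
    (hv : ∀ᶠ n in l, ‖v n‖ ≤ B) :
    ∃ F : H, ∀ w : H, ClusterPt (⟪F, w⟫_ℂ) (Filter.map (fun n => ⟪v n, w⟫_ℂ) l) := by
  classical
  set g : ℕ → WeakDual ℂ H :=
    fun n => StrongDual.toWeakDual (InnerProductSpace.toDual ℂ H (v n)) with hg
  have hcpt : IsCompact (⇑WeakDual.toStrongDual ⁻¹' closedBall (0 : StrongDual ℂ H) B) :=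
    WeakDual.isCompact_closedBall 0 B
  have hle : Filter.map g l ≤ Filter.principal
      (⇑WeakDual.toStrongDual ⁻¹' closedBall (0 : StrongDual ℂ H) B) := by
    rw [Filter.le_principal_iff, Filter.mem_map]
    filter_upwards [hv] with n hn
    simp only [Set.mem_preimage, mem_closedBall, dist_zero_right]
    show ‖(InnerProductSpace.toDual ℂ H) (v n)‖ ≤ B
    rwa [(InnerProductSpace.toDual ℂ H).norm_map]
  obtain ⟨x, -, hx⟩ := hcpt.exists_clusterPt hle
  refine ⟨(InnerProductSpace.toDual ℂ H).symm (StrongDual.toWeakDual.symm x), fun w => ?_⟩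
  have h1 : ClusterPt (x w) (Filter.map (fun ψ : WeakDual ℂ H => ψ w) (Filter.map g l)) :=
    hx.map (WeakDual.eval_continuous w).continuousAt Filter.tendsto_map
  have h2 : (fun ψ : WeakDual ℂ H => ψ w) ∘ g = fun n => ⟪v n, w⟫_ℂ := by
    funext n
    exact InnerProductSpace.toDual_apply_apply
  rw [Filter.map_map, h2] at h1
  have h3 : ⟪(InnerProductSpace.toDual ℂ H).symm (StrongDual.toWeakDual.symm x), w⟫_ℂ
      = x w := by
    rw [← InnerProductSpace.toDual_apply_apply]
    simp
  rwa [h3]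

lemma clusterPt_eq_of_tendsto {α : Type*} {z w : ℂ} {f : α → ℂ} {l : Filter α}
    (hcl : ClusterPt z (Filter.map f l)) (ht : Tendsto f l (nhds w)) : z = w :=
  eq_of_nhds_neBot (hcl.mono ht)

/-- abstract Julia–Carathéodory, key implication.
`k`, `t` are reproducing kernels on `X`, `Y`, modelled by Hilbert spaces with kernel
vectors (`k x y = ⟪kv x, kv y⟫`, etc.).  `t` satisfies
(B) `|t(x,y)| > b > 0`, and (C) if `|t_λ(y_n)| → ∞` then `y_n →_t λ` (the `t`-kernel
functions at `y_n` converge pointwise to `t_λ`).  `φ ∈ Fact(k,t)` is witnessed by the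
quotient kernel `q = k/(t∘φ)` being realized by a Hilbert space `Hq` with kernel vectors
`qv`.  `ξ ∈ ∂_k X` with boundary function `kξ` (a pointwise limit of `k`-kernel functions
not belonging to `H(k)`), `λ ∈ ∂_t Y` with boundary function `tL`, and
`q_ξ = kξ / (tL ∘ φ)` belongs to `H(q)`.  Then along every sequence `x_n →_k ξ` lying in
a horocyclic region `E_k(M,ξ)`, one has `|tL (φ (x_n))| → ∞` and hence `φ (x_n) →_t λ`. -/
theorem abstract_julia_caratheodory_key
    {X Y : Type*} [Nonempty X] [Nonempty Y]
    {Hk : Type*} [NormedAddCommGroup Hk] [InnerProductSpace ℂ Hk] [CompleteSpace Hk]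
    {Ht : Type*} [NormedAddCommGroup Ht] [InnerProductSpace ℂ Ht] [CompleteSpace Ht]
    {Hq : Type*} [NormedAddCommGroup Hq] [InnerProductSpace ℂ Hq] [CompleteSpace Hq]
    (kv : X → Hk) (k : X → X → ℂ) (hkrep : ∀ x y, k x y = ⟪kv x, kv y⟫_ℂ)
    (tv : Y → Ht) (t : Y → Y → ℂ) (htrep : ∀ x y, t x y = ⟪tv x, tv y⟫_ℂ)
    (φ : X → Y)
    (qv : X → Hq) (hqrep : ∀ x y, k x y / t (φ x) (φ y) = ⟪qv x, qv y⟫_ℂ)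
    -- condition (B)
    (b : ℝ) (hb : 0 < b) (hB : ∀ x y : Y, b < ‖t x y‖)
    -- `λ ∈ ∂_t Y` with boundary function `tL`
    (tL : Y → ℂ)
    (hLbd : ∃ y : ℕ → Y, ∀ z, Tendsto (fun n => t z (y n)) atTop (nhds (tL z)))
    (hLnotin : ¬ ∃ G : Ht, ∀ z, tL z = ⟪tv z, G⟫_ℂ)
    -- condition (C) for `λ`
    (hC : ∀ y : ℕ → Y, Tendsto (fun n => ‖tL (y n)‖) atTop atTop →
      ∀ z, Tendsto (fun n => t z (y n)) atTop (nhds (tL z)))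
    -- `ξ ∈ ∂_k X` with boundary function `kξ`
    (kξ : X → ℂ)
    (hξbd : ∃ x : ℕ → X, ∀ y, Tendsto (fun n => k y (x n)) atTop (nhds (kξ y)))
    (hξnotin : ¬ ∃ F : Hk, ∀ y, kξ y = ⟪kv y, F⟫_ℂ)
    -- `q_ξ ∈ H(k/(t∘φ))`
    (hqξ : ∃ Q : Hq, ∀ x, kξ x / tL (φ x) = ⟪qv x, Q⟫_ℂ) :
    ∀ (x : ℕ → X) (M : ℝ), 0 < M →
      (∀ y, Tendsto (fun n => k y (x n)) atTop (nhds (kξ y))) →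
      (∀ n, (k (x n) (x n)).re ≤ M * ‖kξ (x n)‖ ^ 2) →
      Tendsto (fun n => ‖tL (φ (x n))‖) atTop atTop ∧
        ∀ z, Tendsto (fun n => t z (φ (x n))) atTop (nhds (tL z)) := by
  intro x M hM hconv hhoro
  obtain ⟨Q, hQ⟩ := hqξ
  -- basic norm identities
  have hkre : ∀ z, (k z z).re = ‖kv z‖ ^ 2 := by
    intro z
    rw [hkrep, inner_self_eq_norm_sq_to_K]; norm_cast
  have hkabs : ∀ z, ‖k z z‖ = ‖kv z‖ ^ 2 := by
    intro z
    rw [hkrep, inner_self_eq_norm_sq_to_K]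
    norm_cast
    simp [abs_of_nonneg]
  have hqabs : ∀ z, ‖qv z‖ ^ 2 = ‖kv z‖ ^ 2 / ‖t (φ z) (φ z)‖ := by
    intro z
    have e := congrArg norm (hqrep z z)
    rw [norm_div, hkabs] at e
    have e2 : ‖⟪qv z, qv z⟫_ℂ‖ = ‖qv z‖ ^ 2 := by
      rw [inner_self_eq_norm_sq_to_K]; norm_cast; simp [abs_of_nonneg]
    rw [e2] at e
    exact e.symm
  -- horocycle inequality in norm form
  have hhoro' : ∀ n, ‖kv (x n)‖ ^ 2 ≤ M * ‖kξ (x n)‖ ^ 2 := by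
    intro n; rw [← hkre]; exact hhoro n
  -- Step 1 : ‖kv (x n)‖ → ∞
  have hkvinf : Tendsto (fun n => ‖kv (x n)‖) atTop atTop := by
    by_contra h
    rw [Filter.tendsto_atTop] at h
    push_neg at h
    obtain ⟨B0, hB0⟩ := h
    have hB0' : ∃ᶠ n in atTop, n ∈ {n | ¬ B0 ≤ ‖kv (x n)‖} := by
      simpa only [Set.mem_setOf_eq, not_le] using hB0
    set l : Filter ℕ := atTop ⊓ Filter.principal {n | ¬ B0 ≤ ‖kv (x n)‖} with hl
    haveI : l.NeBot := Filter.frequently_iff_neBot.1 hB0'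
    obtain ⟨F, hF⟩ := exists_inner_clusterPt l (fun n => kv (x n)) B0 (by
      rw [Filter.eventually_inf_principal]
      exact Filter.Eventually.of_forall (fun n hn => (not_le.1 hn).le))
    refine hξnotin ⟨F, fun y => ?_⟩
    have ht : Tendsto (fun n => ⟪kv (x n), kv y⟫_ℂ) l (nhds ((starRingEnd ℂ) (kξ y))) := by
      have h1 : Tendsto (fun n => (starRingEnd ℂ) (k y (x n))) atTop
          (nhds ((starRingEnd ℂ) (kξ y))) := (hconv y).star
      refine (h1.mono_left inf_le_left).congr (fun n => ?_)
      rw [hkrep, inner_conj_symm]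
    have := clusterPt_eq_of_tendsto (hF (kv y)) ht
    rw [← inner_conj_symm, this, Complex.conj_conj]
  -- Step 2 : |kξ (x n)| → ∞
  have hkxiinf : Tendsto (fun n => ‖kξ (x n)‖) atTop atTop := by
    have h1 : Tendsto (fun n => ‖kv (x n)‖ / Real.sqrt M) atTop atTop :=
      hkvinf.atTop_div_const (Real.sqrt_pos.2 hM)
    refine tendsto_atTop_mono (fun n => ?_) h1
    have h2 := hhoro' n
    have hs : Real.sqrt M ^ 2 = M := Real.sq_sqrt hM.le
    have h3 : ‖kv (x n)‖ ^ 2 ≤ (Real.sqrt M * ‖kξ (x n)‖) ^ 2 := by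
      rw [mul_pow, hs]; exact h2
    have h4 : ‖kv (x n)‖ ≤ Real.sqrt M * ‖kξ (x n)‖ := by
      have := Real.sqrt_le_sqrt h3
      rwa [Real.sqrt_sq (norm_nonneg _), Real.sqrt_sq (by positivity)] at this
    rw [div_le_iff₀ (Real.sqrt_pos.2 hM), mul_comm]
    exact h4
  -- Step 3 : bound on ‖qv (x n)‖
  have hqvb : ∀ n, ‖qv (x n)‖ ≤ Real.sqrt (M / b) * ‖kξ (x n)‖ := by
    intro n
    have h1 : ‖qv (x n)‖ ^ 2 ≤ M * ‖kξ (x n)‖ ^ 2 / b := by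
      rw [hqabs]
      have htpos := (hB (φ (x n)) (φ (x n)))
      have : ‖kv (x n)‖ ^ 2 / ‖t (φ (x n)) (φ (x n))‖ ≤ ‖kv (x n)‖ ^ 2 / b :=
        div_le_div_of_nonneg_left (by positivity) hb (hB (φ (x n)) (φ (x n))).le
      refine this.trans ?_
      gcongr
      exact hhoro' n
    have h2 : ‖qv (x n)‖ ^ 2 ≤ (Real.sqrt (M / b) * ‖kξ (x n)‖) ^ 2 := by
      rw [mul_pow, Real.sq_sqrt (by positivity)]
      calc ‖qv (x n)‖ ^ 2 ≤ M * ‖kξ (x n)‖ ^ 2 / b := h1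
        _ = M / b * ‖kξ (x n)‖ ^ 2 := by ring
    have := Real.sqrt_le_sqrt h2
    rwa [Real.sqrt_sq (norm_nonneg _), Real.sqrt_sq (by positivity)] at this
  -- |tL z| ≥ b and tL z ≠ 0
  have htLb : ∀ z, b ≤ ‖tL z‖ := by
    intro z
    obtain ⟨yseq, hy⟩ := hLbd
    have h1 : Tendsto (fun n => ‖t z (yseq n)‖) atTop
        (nhds (‖tL z‖)) := (continuous_norm.tendsto _).comp (hy z)
    exact ge_of_tendsto' h1 (fun n => (hB z (yseq n)).le)
  have htL0 : ∀ z, tL z ≠ 0 := by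
    intro z hz
    have := htLb z
    rw [hz, norm_zero] at this
    linarith
  -- eventually kξ (x n) ≠ 0
  have hkne : ∀ᶠ n in atTop, kξ (x n) ≠ 0 := by
    filter_upwards [hkxiinf.eventually_ge_atTop 1] with n hn
    intro h0
    rw [h0, norm_zero] at hn
    linarith
  -- the auxiliary vectors
  set v : ℕ → Hq := fun n => ((starRingEnd ℂ) (kξ (x n)))⁻¹ • qv (x n) with hv
  have hvinner : ∀ n (w : Hq), ⟪v n, w⟫_ℂ = (kξ (x n))⁻¹ * ⟪qv (x n), w⟫_ℂ := by
    intro n w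
    rw [hv]
    simp [inner_smul_left, map_inv₀, Complex.conj_conj]
    ring
  have hvb : ∀ n, ‖v n‖ ≤ Real.sqrt (M / b) := by
    intro n
    rcases eq_or_ne (kξ (x n)) 0 with h0 | h0
    · have : ‖qv (x n)‖ ≤ 0 := by simpa [h0] using hqvb n
      have hq0 : qv (x n) = 0 := norm_le_zero_iff.1 this
      simp [hv, hq0, Real.sqrt_nonneg]
    · have habs : (0 : ℝ) < ‖kξ (x n)‖ := by
        exact norm_pos_iff.2 h0
      rw [hv]
      simp only [norm_smul, norm_inv]
      have h1 : ‖(starRingEnd ℂ) (kξ (x n))‖ = ‖kξ (x n)‖ := by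
        rw [Complex.norm_conj]
      rw [h1]
      calc (‖kξ (x n)‖)⁻¹ * ‖qv (x n)‖
          ≤ (‖kξ (x n)‖)⁻¹ * (Real.sqrt (M / b) * ‖kξ (x n)‖) := by
            gcongr; exact hqvb n
        _ = Real.sqrt (M / b) := by field_simp
  -- the closed span and the projected Q
  set S : Submodule ℂ Hq := (Submodule.span ℂ (Set.range qv)).topologicalClosure with hS
  haveI : CompleteSpace S := (Submodule.isClosed_topologicalClosure _).completeSpace_coe
  have hqvS : ∀ z, qv z ∈ S :=
    fun z => Submodule.le_topologicalClosure _ (Submodule.subset_span (Set.mem_range_self z))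
  have hvS : ∀ n, v n ∈ S := fun n => S.smul_mem _ (hqvS (x n))
  set Q' : Hq := (S.orthogonalProjection Q : Hq) with hQ'
  have hQQ' : ∀ w ∈ S, ⟪w, Q⟫_ℂ = ⟪w, Q'⟫_ℂ := by
    intro w hw
    have horth : Q - Q' ∈ Sᗮ := S.sub_starProjection_mem_orthogonal Q
    have := (Submodule.mem_orthogonal S (Q - Q')).1 horth w hw
    rw [inner_sub_right] at this
    exact sub_eq_zero.1 this
  -- |k (x n) z| = |k z (x n)|
  have habs_symm : ∀ (z : X) (n : ℕ), ‖k (x n) z‖ = ‖k z (x n)‖ := by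
    intro z n
    calc ‖k (x n) z‖ = ‖(starRingEnd ℂ) (k z (x n))‖ := by
          rw [hkrep, hkrep, inner_conj_symm]
      _ = ‖k z (x n)‖ := Complex.norm_conj _
  -- Step 6 : (tL (φ (x n)))⁻¹ → 0
  have ha0 : Tendsto (fun n => (tL (φ (x n)))⁻¹) atTop (nhds 0) := by
    by_contra h
    rw [Metric.tendsto_atTop] at h
    push_neg at h
    obtain ⟨ε, hε, hfr⟩ := h
    have hfr' : ∃ᶠ n in atTop, n ∈ {n | ε ≤ dist ((tL (φ (x n)))⁻¹) 0} := by
      rw [Filter.frequently_atTop]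
      intro N
      obtain ⟨n, hn1, hn2⟩ := hfr N
      exact ⟨n, hn1, hn2⟩
    set l : Filter ℕ := atTop ⊓ Filter.principal {n | ε ≤ dist ((tL (φ (x n)))⁻¹) 0} with hl
    haveI : l.NeBot := Filter.frequently_iff_neBot.1 hfr'
    obtain ⟨F, hF⟩ := exists_inner_clusterPt l v (Real.sqrt (M / b))
      (Filter.Eventually.of_forall hvb)
    -- F is orthogonal to every qv z
    have hFqv : ∀ z, ⟪F, qv z⟫_ℂ = 0 := by
      intro z
      refine clusterPt_eq_of_tendsto (hF (qv z)) ?_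
      have htend : Tendsto (fun n => ⟪v n, qv z⟫_ℂ) atTop (nhds 0) := by
        rw [tendsto_zero_iff_norm_tendsto_zero]
        refine squeeze_zero (fun n => norm_nonneg _)
          (g := fun n => (‖kξ (x n)‖)⁻¹ * (‖k z (x n)‖ / b))
          (fun n => ?_) ?_
        · rw [hvinner, ← hqrep, norm_mul, norm_inv,
            norm_div, habs_symm]
          have hd : ‖k z (x n)‖ / ‖t (φ (x n)) (φ z)‖
              ≤ ‖k z (x n)‖ / b :=
            div_le_div_of_nonneg_left (by positivity) hb (hB (φ (x n)) (φ z)).le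
          exact mul_le_mul_of_nonneg_left hd (by positivity)
        · have h1 : Tendsto (fun n => (‖kξ (x n)‖)⁻¹) atTop (nhds 0) :=
            hkxiinf.inv_tendsto_atTop
          have h2 : Tendsto (fun n => ‖k z (x n)‖ / b) atTop
              (nhds (‖kξ z‖ / b)) :=
            ((continuous_norm.tendsto _).comp (hconv z)).div_const b
          have h3 := h1.mul h2
          rwa [zero_mul] at h3
      exact htend.mono_left inf_le_left
    -- hence F is orthogonal to S
    have hFS : ∀ w ∈ S, ⟪F, w⟫_ℂ = 0 := by
      intro w hw
      have hker : S ≤ LinearMap.ker (innerSL ℂ F : Hq →ₗ[ℂ] ℂ) := by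
        apply Submodule.topologicalClosure_minimal
        · rw [Submodule.span_le]
          rintro - ⟨z, rfl⟩
          simpa using hFqv z
        · exact ContinuousLinearMap.isClosed_ker _
      simpa using hker hw
    have hQ'mem : Q' ∈ S := SetLike.coe_mem _
    have hclosed : IsClosed {w : ℂ | ε ≤ ‖w‖} := isClosed_le continuous_const continuous_norm
    have hmap : Filter.map (fun n => ⟪v n, Q'⟫_ℂ) l ≤ Filter.principal {w : ℂ | ε ≤ ‖w‖} := by
      rw [Filter.le_principal_iff, Filter.mem_map]
      have hev1 : ∀ᶠ n in l, kξ (x n) ≠ 0 := hkne.filter_mono inf_le_left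
      have hev2 : ∀ᶠ n in l, ε ≤ dist ((tL (φ (x n)))⁻¹) 0 := by
        rw [hl, Filter.eventually_inf_principal]
        exact Filter.Eventually.of_forall fun n hn => hn
      filter_upwards [hev1, hev2] with n hn1 hn2
      have heq : ⟪v n, Q'⟫_ℂ = (tL (φ (x n)))⁻¹ := by
        rw [← hQQ' (v n) (hvS n), hvinner, ← hQ, div_eq_mul_inv, ← mul_assoc,
          inv_mul_cancel₀ hn1, one_mul]
      show ε ≤ ‖⟪v n, Q'⟫_ℂ‖
      rw [heq]
      rwa [dist_zero_right] at hn2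
    have hmem : ⟪F, Q'⟫_ℂ ∈ {w : ℂ | ε ≤ ‖w‖} := by
      have := mem_closure_iff_clusterPt.2 ((hF Q').mono hmap)
      rwa [hclosed.closure_eq] at this
    rw [Set.mem_setOf_eq, hFS Q' hQ'mem, norm_zero] at hmem
    linarith
  -- Step 7 : |tL (φ (x n))| → ∞
  have htLinf : Tendsto (fun n => ‖tL (φ (x n))‖) atTop atTop := by
    have h1 : Tendsto (fun n => ‖(tL (φ (x n)))⁻¹‖) atTop (nhds 0) := by
      have := ha0.norm
      rwa [norm_zero] at this
    have h2 : Tendsto (fun n => ‖(tL (φ (x n)))⁻¹‖) atTop (nhdsWithin 0 (Set.Ioi 0)) := by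
      rw [tendsto_nhdsWithin_iff]
      refine ⟨h1, Filter.Eventually.of_forall fun n => ?_⟩
      rw [Set.mem_Ioi, norm_pos_iff]
      exact inv_ne_zero (htL0 _)
    have h3 := tendsto_inv_nhdsGT_zero.comp h2
    refine h3.congr fun n => ?_
    show ‖(tL (φ (x n)))⁻¹‖⁻¹ = ‖tL (φ (x n))‖
    rw [norm_inv, inv_inv]
  exact ⟨htLinf, hC _ htLinf⟩
end

section
/- (Abstract Julia's lemma) Let k be a reproducing kernel on X, φ : X → X with q = k/(k∘φ) a positive semidefinite kernel. Suppose ξ ∈ ∂_k X with boundary function k_ξ and λ ∈ ∂_k X with boundary function k_λ are such that q_ξ(x) = k_ξ(x)/k_λ(φ(x)) belongs to H(q) with ‖q_ξ‖² ≤ c. Then for all x ∈ X with k(x,y) ≠ 0 appropriately: k(φ(x),φ(x))/|k_λ(φ(x))|² ≤ c · k(x,x)/|k_ξ(x)|². In particular φ maps the horocycle E_k(M,ξ) = {x : k(x,x) ≤ M|k_ξ(x)|²} into E_k(cM,λ). -/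
open scoped InnerProductSpace

/-- abstract Julia's lemma.  Let `k` be a reproducing kernel on `X` and
`φ : X → X` such that the quotient kernel `q = k/(k∘φ)` is positive semidefinite,
realized by a Hilbert space `Hq` with kernel vectors `qv`
(`q x y = k x y / k (φ x) (φ y) = ⟪qv x, qv y⟫`).  Suppose the boundary functions
`kξ` (of `ξ ∈ ∂_k X`) and `kL` (of `λ ∈ ∂_k X`) are such that
`q_ξ = kξ / (kL ∘ φ)` belongs to `H(q)` with squared norm at most `c`.  Assuming the
diagonal values of `k` are real and positive and the relevant quantities are nonzero,
for every `x ∈ X`: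
`k(φ x, φ x)/|kL (φ x)|² ≤ c · k(x,x)/|kξ x|²`; in particular `φ` maps each horocycle
`E_k(M,ξ) = {x : k(x,x) ≤ M |kξ x|²}` into `E_k(cM, λ)`. -/
theorem abstract_julia_lemma
    {X : Type*} [Nonempty X]
    {Hq : Type*} [NormedAddCommGroup Hq] [InnerProductSpace ℂ Hq] [CompleteSpace Hq]
    (k : X → X → ℂ) (φ : X → X)
    (qv : X → Hq) (hqrep : ∀ x y, k x y / k (φ x) (φ y) = ⟪qv x, qv y⟫_ℂ)
    (hdiag_im : ∀ x, (k x x).im = 0) (hdiag_pos : ∀ x, 0 < (k x x).re)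
    (kξ : X → ℂ) (kL : X → ℂ)
    (hkξ : ∀ x, kξ x ≠ 0) (hkL : ∀ x, kL x ≠ 0)
    (c : ℝ) (hc : 0 ≤ c)
    (Q : Hq) (hQ : ∀ x, kξ x / kL (φ x) = ⟪qv x, Q⟫_ℂ) (hQn : ‖Q‖ ^ 2 ≤ c) :
    (∀ x : X, (k (φ x) (φ x)).re / ‖kL (φ x)‖ ^ 2 ≤
        c * ((k x x).re / ‖kξ x‖ ^ 2)) ∧
      ∀ M : ℝ, 0 < M → ∀ x : X,
        (k x x).re ≤ M * ‖kξ x‖ ^ 2 →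
        (k (φ x) (φ x)).re ≤ c * M * ‖kL (φ x)‖ ^ 2 := by

  have key : ∀ x : X, (k (φ x) (φ x)).re / ‖kL (φ x)‖ ^ 2 ≤
      c * ((k x x).re / ‖kξ x‖ ^ 2) := by
    intro x
    have hapos := hdiag_pos x
    have hbpos := hdiag_pos (φ x)
    have hka : k x x = ((k x x).re : ℂ) := by
      rw [Complex.ext_iff]; simp [hdiag_im x]
    have hkb : k (φ x) (φ x) = (((k (φ x) (φ x)).re : ℝ) : ℂ) := by
      rw [Complex.ext_iff]; simp [hdiag_im (φ x)]
    have hnq : ‖qv x‖ ^ 2 = (k x x).re / (k (φ x) (φ x)).re := by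
      have h1 := hqrep x x
      rw [hka, hkb, ← Complex.ofReal_div] at h1
      have h2 : (⟪qv x, qv x⟫_ℂ).re = ‖qv x‖ ^ 2 := by
        rw [← inner_self_eq_norm_sq (𝕜 := ℂ)]; rfl
      rw [← h1, Complex.ofReal_re] at h2
      exact h2.symm
    have hcs : ‖kξ x‖ ^ 2 / ‖kL (φ x)‖ ^ 2 ≤
        ((k x x).re / (k (φ x) (φ x)).re) * c := by
      have h3 : ‖kξ x / kL (φ x)‖ = ‖⟪qv x, Q⟫_ℂ‖ := by
        rw [hQ x]
      have h4 : ‖⟪qv x, Q⟫_ℂ‖ ≤ ‖qv x‖ * ‖Q‖ := norm_inner_le_norm _ _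
      have h5 : ‖kξ x / kL (φ x)‖ ^ 2 ≤ ‖qv x‖ ^ 2 * ‖Q‖ ^ 2 := by
        rw [h3, ← mul_pow]
        exact pow_le_pow_left₀ (norm_nonneg _) h4 2
      rw [norm_div, div_pow] at h5
      calc ‖kξ x‖ ^ 2 / ‖kL (φ x)‖ ^ 2
          ≤ ‖qv x‖ ^ 2 * ‖Q‖ ^ 2 := h5
        _ ≤ ((k x x).re / (k (φ x) (φ x)).re) * c := by
            rw [hnq]
            have hn : (0:ℝ) ≤ (k x x).re / (k (φ x) (φ x)).re :=
              div_nonneg hapos.le hbpos.le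
            exact mul_le_mul_of_nonneg_left hQn hn
    have hK : (0:ℝ) < ‖kξ x‖ ^ 2 := pow_pos (norm_pos_iff.mpr (hkξ x)) 2
    have hL : (0:ℝ) < ‖kL (φ x)‖ ^ 2 := pow_pos (norm_pos_iff.mpr (hkL (φ x))) 2
    rw [div_mul_eq_mul_div, div_le_div_iff₀ hL hbpos] at hcs
    rw [mul_div_assoc', div_le_div_iff₀ hL hK]
    nlinarith [hcs]
  refine ⟨key, ?_⟩
  intro M hM x hx
  have h1 := key x
  have hL : (0:ℝ) < ‖kL (φ x)‖ ^ 2 := pow_pos (norm_pos_iff.mpr (hkL (φ x))) 2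
  have hK : (0:ℝ) < ‖kξ x‖ ^ 2 := pow_pos (norm_pos_iff.mpr (hkξ x)) 2
  have h2 : (k x x).re / ‖kξ x‖ ^ 2 ≤ M := by
    rw [div_le_iff₀ hK]; linarith [hx]
  have h3 : (k (φ x) (φ x)).re / ‖kL (φ x)‖ ^ 2 ≤ c * M := by
    calc _ ≤ c * ((k x x).re / ‖kξ x‖ ^ 2) := h1
      _ ≤ c * M := mul_le_mul_of_nonneg_left h2 hc
  rw [div_le_iff₀ hL] at h3
  linarith
end

section
/- (Iteration/Denjoy–Wolff direction) Let k be a reproducing kernel on X with |k(x,y)| > b > 0 for all x,y, satisfying: if |k_ξ(x_n)| → ∞ then x_n →_k ξ. Let φ : X → X be a composition factor of k, ξ ∈ ∂_k X with boundary function k_ξ, and suppose the Julia inequality holds with constant c < 1 and λ = ξ, i.e., φ(E_k(M,ξ)) ⊆ E_k(cM,ξ) for all M > 0, where E_k(M,ξ) = {x : k(x,x) ≤ M|k_ξ(x)|²}. Then for every x ∈ X the iterates satisfy φⁿ(x) →_k ξ; in particular φ has no fixed point in X. -/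
open scoped InnerProductSpace
open Filter

/-- iteration / Denjoy–Wolff direction.  Let `k` be a reproducing kernel
on `X` (modelled by a Hilbert space `Hk` with kernel vectors `kv`) satisfying
`|k(x,y)| > b > 0` and the isolated-singularity condition: if `|kξ (x_n)| → ∞` then
`x_n →_k ξ` (the kernel functions at `x_n` converge pointwise to `kξ`).  Let
`φ : X → X` be a composition factor of `k`, `ξ ∈ ∂_k X` with boundary function `kξ`
(a pointwise limit of kernel functions not belonging to `H(k)`), and suppose the Julia
inequality holds with constant `c < 1` and `λ = ξ`:
`φ(E_k(M,ξ)) ⊆ E_k(cM,ξ)` for all `M > 0`.  Then the iterates satisfy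
`φⁿ(x) →_k ξ` for every `x ∈ X`; in particular `φ` has no fixed point in `X`. -/
theorem iteration_to_boundary
    {X : Type*} [Nonempty X]
    {Hk : Type*} [NormedAddCommGroup Hk] [InnerProductSpace ℂ Hk] [CompleteSpace Hk]
    (kv : X → Hk) (k : X → X → ℂ) (hkrep : ∀ x y, k x y = ⟪kv x, kv y⟫_ℂ)
    (b : ℝ) (hb : 0 < b) (hB : ∀ x y : X, b < ‖k x y‖)
    (kξ : X → ℂ)
    (hξbd : ∃ x : ℕ → X, ∀ y, Tendsto (fun n => k y (x n)) atTop (nhds (kξ y)))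
    (hξnotin : ¬ ∃ F : Hk, ∀ y, kξ y = ⟪kv y, F⟫_ℂ)
    (hC : ∀ x : ℕ → X, Tendsto (fun n => ‖kξ (x n)‖) atTop atTop →
      ∀ y, Tendsto (fun n => k y (x n)) atTop (nhds (kξ y)))
    (φ : X → X)
    (hφ : IsPSDKernel (fun x y => k x y / k (φ x) (φ y)))
    (c : ℝ) (hc0 : 0 ≤ c) (hc1 : c < 1)
    (hjulia : ∀ M : ℝ, 0 < M → ∀ x : X,
      (k x x).re ≤ M * ‖kξ x‖ ^ 2 →
      (k (φ x) (φ x)).re ≤ c * M * ‖kξ (φ x)‖ ^ 2) :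
    (∀ x : X, ∀ y : X,
        Tendsto (fun n => k y (φ^[n] x)) atTop (nhds (kξ y))) ∧
      ∀ x : X, φ x ≠ x := by
  -- k x x is real and > b
  have hreal : ∀ x : X, k x x = ((‖kv x‖ ^ 2 : ℝ) : ℂ) := by
    intro x
    rw [hkrep]
    push_cast
    exact inner_self_eq_norm_sq_to_K (𝕜 := ℂ) (kv x)
  have hkxx : ∀ x : X, b < (k x x).re := by
    intro x
    have h := hB x x
    rw [hreal x] at h ⊢
    rw [Complex.ofReal_re]
    rwa [Complex.norm_real, Real.norm_eq_abs, abs_of_nonneg (by positivity)] at h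
  -- |kξ y| ≥ b
  have hkξ : ∀ y : X, b ≤ ‖kξ y‖ := by
    intro y
    obtain ⟨s, hs⟩ := hξbd
    have h1 : Tendsto (fun n => ‖k y (s n)‖) atTop
        (nhds (‖kξ y‖)) := by
      simpa using (hs y).norm
    exact ge_of_tendsto h1 (Filter.Eventually.of_forall fun n => (hB y (s n)).le)
  have hkξpos : ∀ y : X, 0 < ‖kξ y‖ := fun y => lt_of_lt_of_le hb (hkξ y)
  -- c > 0
  have hc : 0 < c := by
    rcases hc0.lt_or_eq with h | h
    · exact h
    · exfalso
      obtain ⟨x⟩ := ‹Nonempty X›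
      set M := (k x x).re / ‖kξ x‖ ^ 2 with hM
      have hMpos : 0 < M := div_pos (hb.trans (hkxx x)) (pow_pos (hkξpos x) 2)
      have hxE : (k x x).re ≤ M * ‖kξ x‖ ^ 2 :=
        le_of_eq (div_mul_cancel₀ _ (pow_pos (hkξpos x) 2).ne').symm
      have := hjulia M hMpos x hxE
      rw [← h] at this
      simp only [zero_mul] at this
      exact absurd this (not_le.2 (hb.trans (hkxx (φ x))))
  -- key: |kξ (φ^[n] x)| → ∞
  have key : ∀ x : X, Tendsto (fun n => ‖kξ (φ^[n] x)‖) atTop atTop := by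
    intro x
    set M := (k x x).re / ‖kξ x‖ ^ 2 with hM
    have hMpos : 0 < M := div_pos (hb.trans (hkxx x)) (pow_pos (hkξpos x) 2)
    have hiter : ∀ n : ℕ,
        (k (φ^[n] x) (φ^[n] x)).re ≤ (c ^ n * M) * ‖kξ (φ^[n] x)‖ ^ 2 := by
      intro n
      induction n with
      | zero =>
        simp only [Function.iterate_zero, id_eq, pow_zero, one_mul, hM]
        exact le_of_eq (div_mul_cancel₀ _ (pow_pos (hkξpos x) 2).ne').symm
      | succ n ih =>
        have hpos : 0 < c ^ n * M := by positivity
        have := hjulia (c ^ n * M) hpos (φ^[n] x) ih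
        rw [Function.iterate_succ_apply']
        calc (k (φ (φ^[n] x)) (φ (φ^[n] x))).re
            ≤ c * (c ^ n * M) * ‖kξ (φ (φ^[n] x))‖ ^ 2 := this
          _ = (c ^ (n + 1) * M) * ‖kξ (φ (φ^[n] x))‖ ^ 2 := by ring
    have hlow : ∀ n : ℕ,
        Real.sqrt (b / (c ^ n * M)) ≤ ‖kξ (φ^[n] x)‖ := by
      intro n
      have hpos : 0 < c ^ n * M := mul_pos (pow_pos hc n) hMpos
      have h1 : b / (c ^ n * M) ≤ ‖kξ (φ^[n] x)‖ ^ 2 := by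
        rw [div_le_iff₀ hpos]
        calc b ≤ (k (φ^[n] x) (φ^[n] x)).re := (hkxx _).le
          _ ≤ (c ^ n * M) * ‖kξ (φ^[n] x)‖ ^ 2 := hiter n
          _ = ‖kξ (φ^[n] x)‖ ^ 2 * (c ^ n * M) := by ring
      calc Real.sqrt (b / (c ^ n * M)) ≤ Real.sqrt (‖kξ (φ^[n] x)‖ ^ 2) :=
            Real.sqrt_le_sqrt h1
        _ = ‖kξ (φ^[n] x)‖ := Real.sqrt_sq (norm_nonneg _)
    have htend0 : Tendsto (fun n : ℕ => c ^ n * M) atTop (nhds 0) := by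
      simpa using (tendsto_pow_atTop_nhds_zero_of_lt_one hc0 hc1).mul_const M
    have htend0' : Tendsto (fun n : ℕ => c ^ n * M) atTop (nhdsWithin 0 (Set.Ioi 0)) :=
      tendsto_nhdsWithin_of_tendsto_nhds_of_eventually_within _ htend0
        (Filter.Eventually.of_forall fun n => Set.mem_Ioi.2 (mul_pos (pow_pos hc n) hMpos))
    have hdiv : Tendsto (fun n : ℕ => b / (c ^ n * M)) atTop atTop := by
      simpa [div_eq_mul_inv] using
        (Filter.Tendsto.inv_tendsto_nhdsGT_zero htend0').const_mul_atTop hb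
    have hsqrt : Tendsto (fun n : ℕ => Real.sqrt (b / (c ^ n * M))) atTop atTop := by
      rw [tendsto_atTop]
      intro A
      filter_upwards [hdiv.eventually_ge_atTop ((max A 0) ^ 2)] with n hn
      calc A ≤ max A 0 := le_max_left _ _
        _ = Real.sqrt ((max A 0) ^ 2) := (Real.sqrt_sq (le_max_right _ _)).symm
        _ ≤ _ := Real.sqrt_le_sqrt hn
    exact tendsto_atTop_mono hlow hsqrt
  constructor
  · intro x y
    exact hC (fun n => φ^[n] x) (key x) y
  · intro x hx
    have hfix : ∀ n : ℕ, φ^[n] x = x := fun n => Function.iterate_fixed hx n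
    have h := (key x).eventually_gt_atTop (‖kξ x‖)
    rw [Filter.eventually_atTop] at h
    obtain ⟨n, hn⟩ := h
    have := hn n le_rfl
    rw [hfix n] at this
    exact lt_irrefl _ this
end

section
/- Let 0 < α < 1, ζ ∈ 𝕋, and let f : 𝔻 → ℂ be analytic with nontangential limit f(ζ) at ζ. If f'(z)·(1 − z·conj(ζ))^{1−α} → σ·conj(ζ)·α as z → ζ nontangentially (for some σ ∈ ℂ), then (f(ζ) − f(z))/(1 − z·conj(ζ))^{α} → σ as z → ζ nontangentially. -/
open Filter

/-- The nontangential (Stolz) approach region `R_M = {z ∈ 𝔻 : |ζ − z| ≤ M (1 − |z|)}`. -/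
def StolzRegion (ζ : ℂ) (M : ℝ) : Set ℂ :=
  {z : ℂ | ‖z‖ < 1 ∧ ‖ζ - z‖ ≤ M * (1 - ‖z‖)}

/-- `g` has nontangential limit `L` at `ζ`: it tends to `L` along every Stolz region. -/
def NTLimit (g : ℂ → ℂ) (ζ L : ℂ) : Prop :=
  ∀ M : ℝ, 0 < M → Tendsto g (nhdsWithin ζ (StolzRegion ζ M)) (nhds L)

lemma wd_cpow_ofReal_mul {r : ℝ} (hr : 0 < r) {x : ℂ} (hx : x ≠ 0) (c : ℂ) :
    ((r : ℂ) * x) ^ c = (r : ℂ) ^ c * x ^ c := by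
  have hr' : (r : ℂ) ≠ 0 := by exact_mod_cast hr.ne'
  rw [Complex.cpow_def_of_ne_zero (mul_ne_zero hr' hx),
    Complex.cpow_def_of_ne_zero hr', Complex.cpow_def_of_ne_zero hx,
    Complex.log_ofReal_mul hr hx, add_mul, Complex.exp_add, Complex.ofReal_log hr.le]

lemma wd_stolz_segment {ζ z : ℂ} {M : ℝ} (hM : 0 ≤ M) (hζ : ‖ζ‖ = 1)
    (hz : z ∈ StolzRegion ζ M) {t : ℝ} (ht0 : 0 ≤ t) (ht1 : t < 1) :
    z + (t : ℂ) * (ζ - z) ∈ StolzRegion ζ M := by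
  obtain ⟨hz1, hz2⟩ := hz
  have habs : ‖z + (t : ℂ) * (ζ - z)‖ ≤ (1 - t) * ‖z‖ + t := by
    have h1 : z + (t : ℂ) * (ζ - z) = ((1 - t : ℝ) : ℂ) * z + (t : ℂ) * ζ := by
      push_cast; ring
    rw [h1]
    calc ‖((1 - t : ℝ) : ℂ) * z + (t : ℂ) * ζ‖
        ≤ ‖((1 - t : ℝ) : ℂ) * z‖ + ‖(t : ℂ) * ζ‖ :=
          norm_add_le _ _
      _ = (1 - t) * ‖z‖ + t := by
          rw [norm_mul, norm_mul, Complex.norm_real, Complex.norm_real, hζ,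
            Real.norm_of_nonneg (by linarith), Real.norm_of_nonneg ht0, mul_one]
  have hdist : ‖ζ - (z + (t : ℂ) * (ζ - z))‖ = (1 - t) * ‖ζ - z‖ := by
    have h1 : ζ - (z + (t : ℂ) * (ζ - z)) = ((1 - t : ℝ) : ℂ) * (ζ - z) := by push_cast; ring
    rw [h1, norm_mul, Complex.norm_real, Real.norm_of_nonneg (by linarith)]
  constructor
  · have : (1 - t) * ‖z‖ < (1 - t) * 1 :=
      mul_lt_mul_of_pos_left hz1 (by linarith)
    calc ‖z + (t : ℂ) * (ζ - z)‖ ≤ (1 - t) * ‖z‖ + t := habs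
      _ < (1 - t) * 1 + t := by linarith
      _ = 1 := by ring
  · rw [hdist]
    calc (1 - t) * ‖ζ - z‖ ≤ (1 - t) * (M * (1 - ‖z‖)) :=
          mul_le_mul_of_nonneg_left hz2 (by linarith)
      _ = M * ((1 - t) * (1 - ‖z‖)) := by ring
      _ ≤ M * (1 - ‖z + (t : ℂ) * (ζ - z)‖) := by
          apply mul_le_mul_of_nonneg_left _ hM
          nlinarith [habs]

/-- let `0 < α < 1`, `ζ ∈ 𝕋`, and `f` analytic on `𝔻` with nontangential
limit `fζ` at `ζ`.  If `f'(z)(1 − z conj ζ)^{1−α} → σ conj ζ α` nontangentially, then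
`(fζ − f z)/(1 − z conj ζ)^α → σ` nontangentially (principal branch powers). -/
theorem weighted_derivative_to_difference_quotient
    (α : ℝ) (hα0 : 0 < α) (hα1 : α < 1)
    (ζ : ℂ) (hζ : ‖ζ‖ = 1)
    (f : ℂ → ℂ) (hf : DifferentiableOn ℂ f (Metric.ball (0 : ℂ) 1))
    (fζ σ : ℂ)
    (hlim : NTLimit f ζ fζ)
    (hder : NTLimit (fun z => deriv f z * (1 - z * starRingEnd ℂ ζ) ^ ((1 : ℂ) - α))
      ζ (σ * starRingEnd ℂ ζ * α)) :
    NTLimit (fun z => (fζ - f z) / (1 - z * starRingEnd ℂ ζ) ^ (α : ℂ)) ζ σ := by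
  have hζζ : ζ * starRingEnd ℂ ζ = 1 := by
    rw [Complex.mul_conj, Complex.normSq_eq_norm_sq, hζ]; norm_num
  have hαC : (α : ℂ) ≠ 0 := by exact_mod_cast hα0.ne'
  have hcontder : ContinuousOn (deriv f) (Metric.ball (0 : ℂ) 1) :=
    ((hf.analyticOnNhd Metric.isOpen_ball).deriv).continuousOn
  intro M hM
  rw [Metric.tendsto_nhdsWithin_nhds]
  intro ε hε
  obtain ⟨δ, hδpos, hδ⟩ :=
    Metric.tendsto_nhdsWithin_nhds.mp (hder M hM) (ε * α / 2) (by positivity)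
  refine ⟨δ, hδpos, ?_⟩
  intro z hzS hzδ
  set L : ℂ := σ * starRingEnd ℂ ζ * α with hL
  set w : ℂ := 1 - z * starRingEnd ℂ ζ with hw
  have hzabs : ‖z‖ < 1 := hzS.1
  have hwre : 0 < w.re := by
    have h1 : ‖z * starRingEnd ℂ ζ‖ < 1 := by
      rw [norm_mul, Complex.norm_conj, hζ, mul_one]; exact hzabs
    have h2 : (z * starRingEnd ℂ ζ).re ≤ ‖z * starRingEnd ℂ ζ‖ :=
      Complex.re_le_norm _
    simp only [hw, Complex.sub_re, Complex.one_re]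
    linarith
  have hw0 : w ≠ 0 := fun h => by simp [h] at hwre
  have hwα : w ^ (α : ℂ) ≠ 0 := by
    simp [Complex.cpow_eq_zero_iff, hw0]
  set γ : ℝ → ℂ := fun t => z + (t : ℂ) * (ζ - z) with hγdef
  have hγS : ∀ t : ℝ, 0 ≤ t → t < 1 → γ t ∈ StolzRegion ζ M :=
    fun t ht0 ht1 => wd_stolz_segment hM.le hζ hzS ht0 ht1
  have hγball : ∀ t : ℝ, 0 ≤ t → t < 1 → γ t ∈ Metric.ball (0 : ℂ) 1 := by
    intro t ht0 ht1
    rw [Metric.mem_ball, dist_zero_right]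
    exact (hγS t ht0 ht1).1
  have hγcont : Continuous γ := by
    simp only [hγdef]; fun_prop
  have hkey : ∀ t : ℝ, 1 - γ t * starRingEnd ℂ ζ = ((1 - t : ℝ) : ℂ) * w := by
    intro t
    simp only [hγdef, hw]
    push_cast
    linear_combination (-(t : ℂ)) * hζζ
  have hζw : ζ * w = ζ - z := by
    simp only [hw]
    linear_combination (-z) * hζζ
  set φ : ℝ → ℂ := fun t => deriv f (γ t) * (ζ - z) / w ^ (α : ℂ) with hφ
  set ψ : ℝ → ℂ := fun t => L * ζ * (((1 - t) ^ (α - 1) : ℝ) : ℂ) with hψ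
  -- pointwise formula for φ
  have hpoint : ∀ t : ℝ, 0 ≤ t → t < 1 →
      φ t = (deriv f (γ t) * (1 - γ t * starRingEnd ℂ ζ) ^ ((1 : ℂ) - α)) * ζ *
        (((1 - t) ^ (α - 1) : ℝ) : ℂ) := by
    intro t ht0 ht1
    have h1t : (0 : ℝ) < 1 - t := by linarith
    have hst : ((1 - t : ℝ) : ℂ) ≠ 0 := by exact_mod_cast h1t.ne'
    have e1 : (((1 - t) ^ (α - 1) : ℝ) : ℂ) = ((1 - t : ℝ) : ℂ) ^ ((α : ℂ) - 1) := by
      rw [Complex.ofReal_cpow h1t.le]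
      congr 1
      push_cast; ring
    have es : ((1 - t : ℝ) : ℂ) ^ ((1 : ℂ) - (α : ℂ)) * ((1 - t : ℝ) : ℂ) ^ ((α : ℂ) - 1) = 1 := by
      rw [← Complex.cpow_add _ _ hst]
      norm_num
    have ew : w ^ ((1 : ℂ) - (α : ℂ)) * w ^ (α : ℂ) = w := by
      rw [← Complex.cpow_add _ _ hw0]
      norm_num
    simp only [hφ]
    rw [hkey t, wd_cpow_ofReal_mul h1t hw0, e1, div_eq_iff hwα, ← hζw]
    linear_combination (-(deriv f (γ t) * ζ)) * ew +
      (-(deriv f (γ t) * w ^ ((1 : ℂ) - (α : ℂ)) * w ^ (α : ℂ) * ζ)) * es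
  -- FTC on [0, s]
  have hφcont : ∀ s : ℝ, 0 ≤ s → s < 1 →
      ContinuousOn (fun t => deriv f (γ t) * (ζ - z)) (Set.uIcc (0 : ℝ) s) := by
    intro s hs0 hs1
    have hmem : Set.MapsTo γ (Set.uIcc (0 : ℝ) s) (Metric.ball (0 : ℂ) 1) := by
      intro t ht
      rw [Set.uIcc_of_le hs0, Set.mem_Icc] at ht
      exact hγball t ht.1 (lt_of_le_of_lt ht.2 hs1)
    exact (hcontder.comp hγcont.continuousOn hmem).mul continuousOn_const
  have hFTC : ∀ s : ℝ, 0 ≤ s → s < 1 →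
      ∫ t in (0 : ℝ)..s, deriv f (γ t) * (ζ - z) = f (γ s) - f z := by
    intro s hs0 hs1
    have hderivAt : ∀ t ∈ Set.uIcc (0 : ℝ) s,
        HasDerivAt (fun u : ℝ => f (γ u)) (deriv f (γ t) * (ζ - z)) t := by
      intro t ht
      rw [Set.uIcc_of_le hs0, Set.mem_Icc] at ht
      have hd : DifferentiableAt ℂ f (γ t) :=
        hf.differentiableAt (Metric.isOpen_ball.mem_nhds
          (hγball t ht.1 (lt_of_le_of_lt ht.2 hs1)))
      have h2 : HasDerivAt (fun u : ℂ => z + u * (ζ - z)) (ζ - z) ((t : ℝ) : ℂ) := by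
        simpa using ((hasDerivAt_id (((t : ℝ) : ℂ))).mul_const (ζ - z)).const_add z
      have h3 : HasDerivAt (fun u : ℂ => f (z + u * (ζ - z)))
          (deriv f (γ t) * (ζ - z)) ((t : ℝ) : ℂ) := by
        have := (hd.hasDerivAt).comp (((t : ℝ) : ℂ)) h2
        simpa [hγdef, Function.comp_def] using this
      exact h3.comp_ofReal
    have hint : IntervalIntegrable (fun t => deriv f (γ t) * (ζ - z))
        MeasureTheory.volume 0 s := (hφcont s hs0 hs1).intervalIntegrable
    rw [intervalIntegral.integral_eq_sub_of_hasDerivAt hderivAt hint]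
    simp [hγdef]
  have hφint : ∀ s : ℝ, 0 ≤ s → s < 1 →
      IntervalIntegrable φ MeasureTheory.volume 0 s := by
    intro s hs0 hs1
    apply ContinuousOn.intervalIntegrable
    simp only [hφ, div_eq_mul_inv]
    exact (hφcont s hs0 hs1).mul continuousOn_const
  have hEeq : ∀ s : ℝ, 0 ≤ s → s < 1 →
      ∫ t in (0 : ℝ)..s, φ t = (f (γ s) - f z) / w ^ (α : ℂ) := by
    intro s hs0 hs1
    simp only [hφ]
    rw [intervalIntegral.integral_div, hFTC s hs0 hs1]
  -- the real weight integral
  have hrcont : ∀ s : ℝ, 0 ≤ s → s < 1 →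
      ContinuousOn (fun t : ℝ => (1 - t) ^ (α - 1)) (Set.uIcc (0 : ℝ) s) := by
    intro s hs0 hs1
    apply ContinuousOn.rpow_const (by fun_prop)
    intro t ht
    rw [Set.uIcc_of_le hs0, Set.mem_Icc] at ht
    left
    have : t < 1 := lt_of_le_of_lt ht.2 hs1
    intro h; rw [sub_eq_zero] at h; linarith
  have hrint : ∀ s : ℝ, 0 ≤ s → s ≤ 1 →
      ∫ t in (0 : ℝ)..s, (1 - t) ^ (α - 1) = (1 - (1 - s) ^ α) / α := by
    intro s hs0 hs1
    have h1 : (∫ t in (0 : ℝ)..s, (1 - t) ^ (α - 1))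
        = ∫ x in (1 - s)..(1 - 0 : ℝ), x ^ (α - 1) :=
      intervalIntegral.integral_comp_sub_left (fun x => x ^ (α - 1)) 1
    rw [h1, integral_rpow (Or.inl (by linarith))]
    norm_num [Real.one_rpow]
  have hψint : ∀ s : ℝ, 0 ≤ s → s < 1 →
      IntervalIntegrable ψ MeasureTheory.volume 0 s := by
    intro s hs0 hs1
    apply ContinuousOn.intervalIntegrable
    simp only [hψ]
    exact continuousOn_const.mul (Complex.continuous_ofReal.comp_continuousOn
      (hrcont s hs0 hs1))
  have hψeq : ∀ s : ℝ, 0 ≤ s → s < 1 →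
      ∫ t in (0 : ℝ)..s, ψ t = L * ζ * (((1 - (1 - s) ^ α) / α : ℝ) : ℂ) := by
    intro s hs0 hs1
    simp only [hψ]
    rw [intervalIntegral.integral_const_mul]
    congr 1
    rw [intervalIntegral.integral_ofReal, hrint s hs0 hs1.le]
  -- the uniform bound
  have hbound : ∀ s : ℝ, 0 ≤ s → s < 1 →
      ‖(∫ t in (0 : ℝ)..s, φ t) - ∫ t in (0 : ℝ)..s, ψ t‖ ≤ ε / 2 := by
    intro s hs0 hs1
    rw [← intervalIntegral.integral_sub (hφint s hs0 hs1) (hψint s hs0 hs1)]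
    have hgint : IntervalIntegrable (fun t : ℝ => ε * α / 2 * (1 - t) ^ (α - 1))
        MeasureTheory.volume 0 s :=
      (continuousOn_const.mul (hrcont s hs0 hs1)).intervalIntegrable
    have hle : ‖∫ t in (0 : ℝ)..s, (φ t - ψ t)‖
        ≤ |∫ t in (0 : ℝ)..s, ε * α / 2 * (1 - t) ^ (α - 1)| := by
      apply intervalIntegral.norm_integral_le_abs_of_norm_le _ hgint
      rw [Set.uIoc_of_le hs0]
      filter_upwards [MeasureTheory.ae_restrict_mem measurableSet_Ioc] with t ht
      have ht0 : (0 : ℝ) ≤ t := ht.1.le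
      have ht1 : t < 1 := lt_of_le_of_lt ht.2 hs1
      have hr0 : (0 : ℝ) ≤ (1 - t) ^ (α - 1) := Real.rpow_nonneg (by linarith) _
      have hdist : dist (deriv f (γ t) * (1 - γ t * starRingEnd ℂ ζ) ^ ((1 : ℂ) - α)) L
          < ε * α / 2 := by
        have hmem : γ t ∈ StolzRegion ζ M := hγS t ht0 ht1
        have hclose : dist (γ t) ζ < δ := by
          rw [Complex.dist_eq]
          have h1 : γ t - ζ = -(((1 - t : ℝ) : ℂ) * (ζ - z)) := by
            simp only [hγdef]; push_cast; ring
          calc ‖γ t - ζ‖ = (1 - t) * ‖ζ - z‖ := by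
                rw [h1, norm_neg, norm_mul, Complex.norm_real, Real.norm_of_nonneg (by linarith)]
            _ ≤ ‖ζ - z‖ := by nlinarith [norm_nonneg (ζ - z)]
            _ = dist z ζ := by
                rw [Complex.dist_eq, ← norm_neg (z - ζ)]; congr 1; ring
            _ < δ := hzδ
        exact hδ hmem hclose
      rw [hpoint t ht0 ht1]
      have heq : (deriv f (γ t) * (1 - γ t * starRingEnd ℂ ζ) ^ ((1 : ℂ) - α)) * ζ *
            (((1 - t) ^ (α - 1) : ℝ) : ℂ) - ψ t
          = ((deriv f (γ t) * (1 - γ t * starRingEnd ℂ ζ) ^ ((1 : ℂ) - α)) - L) * ζ *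
            (((1 - t) ^ (α - 1) : ℝ) : ℂ) := by
        simp only [hψ]; ring
      rw [heq, norm_mul, norm_mul, hζ, mul_one, Complex.norm_real,
        Real.norm_eq_abs, abs_of_nonneg hr0]
      have hnd : ‖deriv f (γ t) * (1 - γ t * starRingEnd ℂ ζ) ^ ((1 : ℂ) - ↑α) - L‖
          ≤ ε * α / 2 := by
        rw [← dist_eq_norm]
        exact hdist.le
      exact mul_le_mul_of_nonneg_right hnd hr0
    have hX0 : (0 : ℝ) ≤ (1 - s) ^ α := Real.rpow_nonneg (by linarith) _
    have hX1 : (1 - s) ^ α ≤ 1 := Real.rpow_le_one (by linarith) (by linarith) hα0.le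
    calc ‖∫ t in (0 : ℝ)..s, (φ t - ψ t)‖
        ≤ |∫ t in (0 : ℝ)..s, ε * α / 2 * (1 - t) ^ (α - 1)| := hle
      _ = ε * α / 2 * ((1 - (1 - s) ^ α) / α) := by
          rw [intervalIntegral.integral_const_mul, hrint s hs0 hs1.le, abs_of_nonneg]
          exact mul_nonneg (by positivity) (div_nonneg (by linarith) hα0.le)
      _ = ε / 2 * (1 - (1 - s) ^ α) := by field_simp
      _ ≤ ε / 2 := by nlinarith
  -- limits as s → 1⁻
  haveI hne : (nhdsWithin (1 : ℝ) (Set.Ico (0 : ℝ) 1)).NeBot := by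
    apply mem_closure_iff_nhdsWithin_neBot.mp
    rw [closure_Ico (by norm_num : (0 : ℝ) ≠ 1)]
    exact Set.mem_Icc.mpr ⟨by norm_num, le_refl 1⟩
  have hγtends : Tendsto γ (nhdsWithin (1 : ℝ) (Set.Ico (0 : ℝ) 1))
      (nhdsWithin ζ (StolzRegion ζ M)) := by
    rw [tendsto_nhdsWithin_iff]
    constructor
    · have hγ1 : γ 1 = ζ := by simp [hγdef]
      have := (hγcont.tendsto 1).mono_left (nhdsWithin_le_nhds (s := Set.Ico (0 : ℝ) 1))
      rwa [hγ1] at this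
    · filter_upwards [eventually_mem_nhdsWithin] with t ht
      exact hγS t ht.1 ht.2
  have hEtends : Tendsto (fun s => ∫ t in (0 : ℝ)..s, φ t)
      (nhdsWithin (1 : ℝ) (Set.Ico (0 : ℝ) 1)) (nhds ((fζ - f z) / w ^ (α : ℂ))) := by
    have h1 : Tendsto (fun s => (f (γ s) - f z) / w ^ (α : ℂ))
        (nhdsWithin (1 : ℝ) (Set.Ico (0 : ℝ) 1)) (nhds ((fζ - f z) / w ^ (α : ℂ))) :=
      (((hlim M hM).comp hγtends).sub_const (f z)).div_const _
    apply h1.congr'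
    filter_upwards [eventually_mem_nhdsWithin] with s hs
    exact (hEeq s hs.1 hs.2).symm
  have hψtends : Tendsto (fun s => ∫ t in (0 : ℝ)..s, ψ t)
      (nhdsWithin (1 : ℝ) (Set.Ico (0 : ℝ) 1)) (nhds σ) := by
    have hσeq : L * ζ * (((1 - 0) / α : ℝ) : ℂ) = σ := by
      rw [hL]
      push_cast
      field_simp
      linear_combination σ * hζζ
    have h3 : Tendsto (fun s : ℝ => (1 - s) ^ α) (nhds (1 : ℝ)) (nhds 0) := by
      have hc : ContinuousAt (fun x : ℝ => x ^ α) 0 :=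
        Real.continuousAt_rpow_const 0 α (Or.inr hα0.le)
      have hsub : Tendsto (fun s : ℝ => 1 - s) (nhds (1 : ℝ)) (nhds 0) := by
        have hc2 : Continuous (fun s : ℝ => 1 - s) := by fun_prop
        simpa using hc2.tendsto (1 : ℝ)
      have := hc.tendsto.comp hsub
      simpa [Real.zero_rpow hα0.ne', Function.comp_def] using this
    have h2 : Tendsto (fun s : ℝ => L * ζ * (((1 - (1 - s) ^ α) / α : ℝ) : ℂ))
        (nhds (1 : ℝ)) (nhds (L * ζ * (((1 - 0) / α : ℝ) : ℂ))) := by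
      apply Tendsto.const_mul
      exact (Complex.continuous_ofReal.tendsto _).comp
        ((tendsto_const_nhds.sub h3).div_const α)
    rw [hσeq] at h2
    apply (h2.mono_left nhdsWithin_le_nhds).congr'
    filter_upwards [eventually_mem_nhdsWithin] with s hs
    exact (hψeq s hs.1 hs.2).symm
  have hdifftends : Tendsto
      (fun s => (∫ t in (0 : ℝ)..s, φ t) - ∫ t in (0 : ℝ)..s, ψ t)
      (nhdsWithin (1 : ℝ) (Set.Ico (0 : ℝ) 1))
      (nhds ((fζ - f z) / w ^ (α : ℂ) - σ)) := hEtends.sub hψtends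
  have hfinal : ‖(fζ - f z) / w ^ (α : ℂ) - σ‖ ≤ ε / 2 := by
    apply le_of_tendsto hdifftends.norm
    filter_upwards [eventually_mem_nhdsWithin] with s hs
    exact hbound s hs.1 hs.2
  show dist ((fζ - f z) / (1 - z * starRingEnd ℂ ζ) ^ (α : ℂ)) σ < ε
  rw [← hw, Complex.dist_eq]
  calc ‖(fζ - f z) / w ^ (α : ℂ) - σ‖
      = ‖(fζ - f z) / w ^ (α : ℂ) - σ‖ := rfl
    _ ≤ ε / 2 := hfinal
    _ < ε := by linarith
end

section
/- Let 0 < α < 1, ζ ∈ 𝕋, and let f : 𝔻 → ℂ be analytic such that (f(ζ) − f(z))/(1 − z·conj(ζ))^{α} → σ as z → ζ nontangentially. Then f'(z)·(1 − z·conj(ζ))^{1−α} → σ·conj(ζ)·α as z → ζ nontangentially. -/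
open Filter

/-- let `0 < α < 1`, `ζ ∈ 𝕋`, and `f` analytic on `𝔻` such that
`(f(ζ) − f z)/(1 − z conj ζ)^α → σ` nontangentially.  Then
`f'(z)(1 − z conj ζ)^{1−α} → σ conj ζ α` nontangentially (principal branch powers). -/
theorem difference_quotient_to_weighted_derivative
    (α : ℝ) (hα0 : 0 < α) (hα1 : α < 1)
    (ζ : ℂ) (hζ : ‖ζ‖ = 1)
    (f : ℂ → ℂ) (hf : DifferentiableOn ℂ f (Metric.ball (0 : ℂ) 1))
    (fζ σ : ℂ)
    (hquot : NTLimit (fun z => (fζ - f z) / (1 - z * starRingEnd ℂ ζ) ^ (α : ℂ)) ζ σ) :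
    NTLimit (fun z => deriv f z * (1 - z * starRingEnd ℂ ζ) ^ ((1 : ℂ) - α))
      ζ (σ * starRingEnd ℂ ζ * α) := by
  set cζ : ℂ := starRingEnd ℂ ζ with hcζ
  set u : ℂ → ℂ := fun z => 1 - z * cζ with hu
  -- basic facts
  have hzz : ζ * cζ = 1 := by
    rw [hcζ, Complex.mul_conj, ← Complex.sq_norm, hζ]; norm_num
  have habsu : ∀ w : ℂ, ‖u w‖ = ‖ζ - w‖ := by
    intro w
    have : u w = (ζ - w) * cζ := by rw [hu]; simp only; rw [sub_mul, hzz]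
    rw [this, norm_mul, hcζ, Complex.norm_conj, hζ, mul_one]
  have hure : ∀ w : ℂ, ‖w‖ < 1 → 0 < (u w).re := by
    intro w hw
    have h1 : ‖w * cζ‖ < 1 := by
      rw [norm_mul, hcζ, Complex.norm_conj, hζ, mul_one]; exact hw
    have h2 : (w * cζ).re ≤ ‖w * cζ‖ := Complex.re_le_norm _
    have : (u w).re = 1 - (w * cζ).re := by simp [hu]
    rw [this]; linarith
  have hu0 : ∀ w : ℂ, ‖w‖ < 1 → u w ≠ 0 := by
    intro w hw h
    have := hure w hw
    rw [h] at this; simp at this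
  have huα0 : ∀ w : ℂ, ‖w‖ < 1 → u w ^ (α : ℂ) ≠ 0 := by
    intro w hw h
    exact hu0 w hw ((Complex.cpow_eq_zero_iff _ _).1 h).1
  -- the auxiliary function g
  set g : ℂ → ℂ := fun z => fζ - f z - σ * u z ^ (α : ℂ) with hgdef
  have hgd : ∀ z : ℂ, ‖z‖ < 1 →
      HasDerivAt g (-deriv f z + σ * cζ * (α : ℂ) * u z ^ ((α : ℂ) - 1)) z := by
    intro z hz
    have hzb : z ∈ Metric.ball (0 : ℂ) 1 := by
      simpa [Metric.mem_ball, Complex.dist_eq] using hz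
    have hfz : HasDerivAt f (deriv f z) z :=
      (hf.differentiableAt (Metric.isOpen_ball.mem_nhds hzb)).hasDerivAt
    have hud : HasDerivAt u (-cζ) z := by
      simpa using ((hasDerivAt_id z).mul_const cζ).const_sub 1
    have hcp : HasDerivAt (fun w => u w ^ (α : ℂ))
        ((α : ℂ) * u z ^ ((α : ℂ) - 1) * (-cζ)) z :=
      hud.cpow_const (Complex.mem_slitPlane_iff.2 (Or.inl (hure z hz)))
    have h := ((hasDerivAt_const z fζ).sub hfz).sub (hcp.const_mul σ)
    exact h.congr_deriv (by ring)
  have hgdiff : DifferentiableOn ℂ g (Metric.ball (0 : ℂ) 1) := by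
    intro z hz
    have hz' : ‖z‖ < 1 := by
      simpa [Metric.mem_ball, Complex.dist_eq] using hz
    exact ((hgd z hz').differentiableAt).differentiableWithinAt
  -- main work: fix M
  intro M hM
  have hM' : (0 : ℝ) < 2 * M + 1 := by linarith
  -- h := g / u^α tends to 0 nontangentially in Stolz (2M+1)
  have hh : Tendsto (fun z => g z / u z ^ (α : ℂ))
      (nhdsWithin ζ (StolzRegion ζ (2 * M + 1))) (nhds 0) := by
    have h1 := (hquot (2 * M + 1) hM').sub_const σ
    rw [sub_self] at h1
    refine h1.congr' ?_
    filter_upwards [self_mem_nhdsWithin] with z hz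
    have hz1 : ‖z‖ < 1 := hz.1
    have := huα0 z hz1
    show (fζ - f z) / u z ^ (α : ℂ) - σ = (fζ - f z - σ * u z ^ (α : ℂ)) / u z ^ (α : ℂ)
    rw [sub_div _ (σ * _), mul_div_cancel_right₀ _ this]
  -- main estimate: deriv g * u^(1-α) → 0 along Stolz M
  have core : Tendsto (fun z => deriv g z * u z ^ ((1 : ℂ) - α))
      (nhdsWithin ζ (StolzRegion ζ M)) (nhds 0) := by
    rw [Metric.tendsto_nhdsWithin_nhds]
    intro η hη
    set K : ℝ := (2 * M + 1) ^ α * (2 * M) ^ (1 - α) with hK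
    have hK0 : 0 ≤ K :=
      mul_nonneg (Real.rpow_nonneg (by linarith) _) (Real.rpow_nonneg (by linarith) _)
    set ε : ℝ := η / (K + 1) with hε
    have hε0 : 0 < ε := div_pos hη (by linarith)
    rw [Metric.tendsto_nhdsWithin_nhds] at hh
    obtain ⟨δ0, hδ0, hhb⟩ := hh ε hε0
    refine ⟨δ0 / 2, by linarith, ?_⟩
    intro z hzS hzd
    have hz1 : ‖z‖ < 1 := hzS.1
    have hz2 : ‖ζ - z‖ ≤ M * (1 - ‖z‖) := hzS.2
    set r : ℝ := (1 - ‖z‖) / 2 with hr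
    have hr0 : 0 < r := by
      rw [hr]; linarith
    have hr_le : r ≤ dist z ζ := by
      have h1 : 1 - ‖z‖ ≤ ‖ζ - z‖ := by
        have := norm_sub_norm_le ζ z
        simp only [hζ] at this
        linarith
      rw [dist_comm, Complex.dist_eq, hr]
      calc r ≤ 1 - ‖z‖ := by rw [hr]; linarith
        _ ≤ ‖ζ - z‖ := h1
    -- bound on the sphere
    have hsphere : ∀ w ∈ Metric.sphere z r, ‖g w‖ ≤ ε * ((2 * M + 1) * r) ^ α := by
      intro w hw
      have hwz : ‖w - z‖ = r := by
        rw [Metric.mem_sphere, Complex.dist_eq] at hw; exact hw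
      have hwabs : ‖w‖ ≤ ‖z‖ + r := by
        calc ‖w‖ = ‖z + (w - z)‖ := by ring_nf
          _ ≤ ‖z‖ + ‖w - z‖ := norm_add_le _ _
          _ = ‖z‖ + r := by rw [hwz]
      have hw1 : ‖w‖ < 1 := by
        have : ‖z‖ + r < 1 := by rw [hr]; linarith
        linarith
      have hw1' : r ≤ 1 - ‖w‖ := by
        have : ‖z‖ + r ≤ 1 - r := by rw [hr]; linarith
        linarith
      have hζw : ‖ζ - w‖ ≤ (2 * M + 1) * r := by
        calc ‖ζ - w‖ = ‖(ζ - z) + (z - w)‖ := by ring_nf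
          _ ≤ ‖ζ - z‖ + ‖z - w‖ := norm_add_le _ _
          _ ≤ M * (1 - ‖z‖) + r := by
              have : ‖z - w‖ = r := by rw [norm_sub_rev]; exact hwz
              rw [this]; linarith
          _ = (2 * M + 1) * r := by rw [hr]; ring
      have hwS : w ∈ StolzRegion ζ (2 * M + 1) := by
        refine ⟨hw1, le_trans hζw ?_⟩
        exact mul_le_mul_of_nonneg_left hw1' (by linarith)
      have hwζ : dist w ζ < δ0 := by
        have h1 : dist w ζ ≤ dist w z + dist z ζ := dist_triangle _ _ _
        have h2 : dist w z = r := by rwa [Metric.mem_sphere] at hw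
        have : dist w ζ ≤ 2 * dist z ζ := by rw [← h2] at hr_le; linarith
        linarith
      have hhw : ‖g w / u w ^ (α : ℂ)‖ < ε := by
        have := hhb hwS hwζ
        rwa [dist_zero_right] at this
      have hgw : g w = (g w / u w ^ (α : ℂ)) * u w ^ (α : ℂ) :=
        (div_mul_cancel₀ _ (huα0 w hw1)).symm
      have habsuw : ‖u w ^ (α : ℂ)‖ = ‖u w‖ ^ α := by
        rw [Complex.norm_cpow_real]
      calc ‖g w‖ = ‖g w / u w ^ (α : ℂ)‖ * ‖u w ^ (α : ℂ)‖ := by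
            rw [← norm_mul, div_mul_cancel₀ _ (huα0 w hw1)]
        _ ≤ ε * ((2 * M + 1) * r) ^ α := by
            apply mul_le_mul hhw.le ?_ (norm_nonneg _) hε0.le
            rw [habsuw, habsu]
            exact Real.rpow_le_rpow (norm_nonneg _) hζw hα0.le
    -- Cauchy estimate
    have hsub : Metric.closedBall z r ⊆ Metric.ball (0 : ℂ) 1 := by
      intro w hw
      rw [Metric.mem_closedBall, Complex.dist_eq] at hw
      rw [Metric.mem_ball, Complex.dist_eq, sub_zero]
      calc ‖w‖ = ‖z + (w - z)‖ := by ring_nf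
        _ ≤ ‖z‖ + ‖w - z‖ := norm_add_le _ _
        _ ≤ ‖z‖ + r := by linarith
        _ < 1 := by rw [hr]; linarith
    have hdcc : DiffContOnCl ℂ g (Metric.ball z r) := by
      apply DifferentiableOn.diffContOnCl
      rw [closure_ball z hr0.ne']
      exact hgdiff.mono hsub
    have hC := Complex.norm_deriv_le_of_forall_mem_sphere_norm_le hr0 hdcc hsphere
    -- assemble
    have huz : ‖u z‖ ≤ 2 * M * r := by
      rw [habsu]
      calc ‖ζ - z‖ ≤ M * (1 - ‖z‖) := hz2
        _ = 2 * M * r := by rw [hr]; ring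
    have hpow : ‖u z ^ ((1 : ℂ) - α)‖ = ‖u z‖ ^ (1 - α) := by
      have : ((1 : ℂ) - α) = ((1 - α : ℝ) : ℂ) := by push_cast; ring
      rw [this, Complex.norm_cpow_real]
    rw [dist_zero_right, norm_mul, hpow]
    have hb1 : ‖u z‖ ^ (1 - α) ≤ (2 * M * r) ^ (1 - α) :=
      Real.rpow_le_rpow (norm_nonneg _) huz (by linarith)
    have key : ‖deriv g z‖ * ‖u z‖ ^ (1 - α) ≤
        (ε * ((2 * M + 1) * r) ^ α / r) * ((2 * M * r) ^ (1 - α)) := by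
      apply mul_le_mul hC hb1 (Real.rpow_nonneg (norm_nonneg _) _)
      positivity
    have heq : (ε * ((2 * M + 1) * r) ^ α / r) * ((2 * M * r) ^ (1 - α)) = ε * K := by
      have e1 : ((2 * M + 1) * r) ^ α = (2 * M + 1) ^ α * r ^ α :=
        Real.mul_rpow (by linarith) hr0.le
      have e2 : (2 * M * r) ^ (1 - α) = (2 * M) ^ (1 - α) * r ^ (1 - α) :=
        Real.mul_rpow (by linarith) hr0.le
      have e3 : r ^ α * r ^ (1 - α) = r := by
        rw [← Real.rpow_add hr0, show α + (1 - α) = 1 by ring, Real.rpow_one]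
      rw [e1, e2, hK]
      field_simp
      exact e3
    calc ‖deriv g z‖ * ‖u z‖ ^ (1 - α) ≤ ε * K := by rw [← heq]; exact key
      _ < ε * (K + 1) := by nlinarith
      _ = η := by rw [hε]; field_simp
  -- conclude
  have hfinal : Tendsto (fun z => σ * cζ * (α : ℂ) - deriv g z * u z ^ ((1 : ℂ) - α))
      (nhdsWithin ζ (StolzRegion ζ M)) (nhds (σ * cζ * α)) := by
    have := tendsto_const_nhds (x := σ * cζ * (α : ℂ))
      (f := nhdsWithin ζ (StolzRegion ζ M)) |>.sub core
    simpa using this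
  refine hfinal.congr' ?_
  filter_upwards [self_mem_nhdsWithin] with z hz
  have hz1 : ‖z‖ < 1 := hz.1
  have hone : u z ^ ((α : ℂ) - 1) * u z ^ ((1 : ℂ) - α) = 1 := by
    rw [← Complex.cpow_add _ _ (hu0 z hz1), show ((α : ℂ) - 1) + ((1 : ℂ) - α) = 0 by ring,
      Complex.cpow_zero]
  have hdg : deriv g z = -deriv f z + σ * cζ * (α : ℂ) * u z ^ ((α : ℂ) - 1) :=
    (hgd z hz1).deriv
  rw [hdg]
  linear_combination (-σ * cζ * (α : ℂ)) * hone
end
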